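/- arXiv:2104.00209 — 3 statements merged into one kernel-verified Lean document; each statement's English description precedes it below -/
import Mathlib

section
/- (Linear pointwise decay estimate) There is an absolute constant C such that for every f : ℝ → ℂ with ⟨x⟩f ∈ L²(ℝ) and every t ≥ 1, ‖e^{itΔ}f‖_{L^∞} ≤ C t^{-1/2} ( ‖𝓕f‖_{L^∞} + t^{-1/20} ‖⟨x⟩f‖_{L²} ). -/
open MeasureTheory Complex
open scoped ENNReal

noncomputable section

/-- The Fourier transform with the paper's convention:
`𝓕f(ξ) = (2π)^{-1/2} ∫ e^{ixξ} f(x) dx`. -/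
def FT (f : ℝ → ℂ) (ξ : ℝ) : ℂ :=
  ((2 * Real.pi) ^ (-(1 : ℝ)/2)) • ∫ x : ℝ, Complex.exp (Complex.I * x * ξ) * f x

/-- The inverse Fourier transform: `𝓕⁻¹f(x) = (2π)^{-1/2} ∫ e^{-ixξ} f(ξ) dξ`. -/
def FTinv (f : ℝ → ℂ) (x : ℝ) : ℂ :=
  ((2 * Real.pi) ^ (-(1 : ℝ)/2)) • ∫ ξ : ℝ, Complex.exp (-(Complex.I * x * ξ)) * f ξ

/-- The free Schrödinger propagator `e^{itΔ} = 𝓕⁻¹ e^{-itξ²} 𝓕`. -/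
def schrod (t : ℝ) (f : ℝ → ℂ) : ℝ → ℂ :=
  FTinv fun ξ => Complex.exp (-(Complex.I * t * ξ ^ 2)) * FT f ξ

/-- The `L^p` norm of a function on `ℝ`, as a real number. -/
def Lnorm (p : ℝ≥0∞) (f : ℝ → ℂ) : ℝ := (eLpNorm f p volume).toReal

/-- The operator `⟨∂_x⟩ = 𝓕⁻¹⟨ξ⟩𝓕`. -/
def jder (f : ℝ → ℂ) : ℝ → ℂ :=
  FTinv fun ξ => (Real.sqrt (1 + ξ ^ 2) : ℂ) * FT f ξ

/-- The `H^{1,1}` norm: `‖⟨∂_x⟩u‖_{L²} + ‖xu‖_{L²}`. -/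
def H11norm (f : ℝ → ℂ) : ℝ :=
  Lnorm 2 (jder f) + Lnorm 2 (fun x : ℝ => (x : ℂ) * f x)

/-- Membership in `H^{1,1}`. -/
def MemH11 (f : ℝ → ℂ) : Prop :=
  MemLp (jder f) 2 (volume : Measure ℝ) ∧
    MemLp (fun x : ℝ => (x : ℂ) * f x) 2 (volume : Measure ℝ)

/-- The Galilean operator `J(t) = x + 2it∂_x`. -/
def galilean (t : ℝ) (f : ℝ → ℂ) : ℝ → ℂ :=
  fun x : ℝ => (x : ℂ) * f x + 2 * Complex.I * (t : ℂ) * deriv f x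

/-- The piecewise-constant dispersion profile `d`. -/
def dmDisp (dp dm tp : ℝ) (t : ℝ) : ℝ := if t < tp then dp else -dm

/-- `D(τ) = ∫_0^τ (d(σ) - 1) dσ`. -/
def dmD (dp dm tp : ℝ) (τ : ℝ) : ℝ := ∫ σ in (0:ℝ)..τ, (dmDisp dp dm tp σ - 1)

/-- The cubic nonlinearity conjugated by the propagator:
`e^{-iaΔ}( |e^{iaΔ}f|² e^{iaΔ}f )`. -/
def dmNonlin (a : ℝ) (f : ℝ → ℂ) : ℝ → ℂ :=
  schrod (-a) fun y => (‖schrod a f y‖ : ℂ) ^ 2 * schrod a f y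

/-- `u` solves the averaged dispersion-managed cubic NLS
`i∂_t u + ∂_{xx} u = ∫_0^1 e^{-iD(τ)Δ}[|e^{iD(τ)Δ}u|² e^{iD(τ)Δ}u] dτ` for times in `s`. -/
def IsDMSol (D : ℝ → ℝ) (u : ℝ → ℝ → ℂ) (s : Set ℝ) : Prop :=
  ∀ t ∈ s, ∀ x : ℝ,
    Complex.I * deriv (fun t' => u t' x) t + deriv (deriv (u t)) x
      = ∫ τ in (0:ℝ)..1, dmNonlin (D τ) (u t) x

/-- The profile `f(t) = e^{-itΔ}u(t)`. -/
def dmProfile (u : ℝ → ℝ → ℂ) (t : ℝ) : ℝ → ℂ := schrod (-t) (u t)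

/-- The dispersive norm `‖u(t)‖_{X_D} = ‖𝓕f(t)‖_{L^∞}`. -/
def XD (u : ℝ → ℝ → ℂ) (t : ℝ) : ℝ := Lnorm ⊤ (FT (dmProfile u t))

/-- The energy norm `‖u(t)‖_{X_E} = t^{-1/20}(‖⟨∂_x⟩u(t)‖_{L²} + ‖J(t)u(t)‖_{L²})`. -/
def XE (u : ℝ → ℝ → ℂ) (t : ℝ) : ℝ :=
  t ^ (-(1 : ℝ)/20) * (Lnorm 2 (jder (u t)) + Lnorm 2 (galilean t (u t)))

/-- `‖u‖_X = sup_{s ∈ [1,T]} (‖u(s)‖_{X_D} + ‖u(s)‖_{X_E})`. -/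
def Xnorm (u : ℝ → ℝ → ℂ) (T : ℝ) : ℝ :=
  sSup ((fun s => XD u s + XE u s) '' Set.Icc 1 T)

/-- Continuity in time with values in `H^{1,1}`. -/
def ContH11On (u : ℝ → ℝ → ℂ) (s : Set ℝ) : Prop :=
  ∀ t ∈ s, MemH11 (u t) ∧
    Filter.Tendsto (fun t' => H11norm fun x => u t' x - u t x)
      (nhdsWithin t s) (nhds 0)

/-- Continuity in time with values in `H^1`. -/
def ContH1On (u : ℝ → ℝ → ℂ) (s : Set ℝ) : Prop :=
  ∀ t ∈ s, MemLp (jder (u t)) 2 (volume : Measure ℝ) ∧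
    Filter.Tendsto (fun t' => Lnorm 2 (jder fun x => u t' x - u t x))
      (nhdsWithin t s) (nhds 0)

/-- The phase `Θ(t,ξ)`. -/
def dmTheta (D : ℝ → ℝ) (u : ℝ → ℝ → ℂ) (t ξ : ℝ) : ℝ :=
  ∫ s in (1:ℝ)..t, ∫ τ in (0:ℝ)..1,
    (2 * (s + D τ))⁻¹ * ‖FT (dmProfile u s) ξ‖ ^ 2

/-- The modified profile `g(t,ξ) = e^{iΘ(t,ξ)} 𝓕f(t,ξ)`. -/
def dmG (D : ℝ → ℝ) (u : ℝ → ℝ → ℂ) (t ξ : ℝ) : ℂ :=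
  Complex.exp (Complex.I * dmTheta D u t ξ) * FT (dmProfile u t) ξ


set_option maxHeartbeats 1000000

namespace LPDaux

open Filter Topology


lemma norm_cexp_eq_one {z : ℂ} (hz : z.re = 0) : ‖Complex.exp z‖ = 1 := by
  rw [Complex.norm_exp, hz, Real.exp_zero]

lemma re_I_mul_ofReal (a : ℝ) : (Complex.I * (a : ℂ)).re = 0 := by simp

lemma norm_cexp_I_mul_ofReal (a : ℝ) : ‖Complex.exp (Complex.I * (a : ℂ))‖ = 1 :=
  norm_cexp_eq_one (by simp)

lemma norm_cexp_I_mul_mul (a b : ℝ) : ‖Complex.exp (Complex.I * (a : ℂ) * (b : ℂ))‖ = 1 :=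
  norm_cexp_eq_one (by simp)

lemma norm_cexp_neg_I_mul_mul (a b : ℝ) : ‖Complex.exp (-(Complex.I * (a : ℂ) * (b : ℂ)))‖ = 1 :=
  norm_cexp_eq_one (by simp)

lemma norm_cexp_neg_I_mul_sq (a b : ℝ) :
    ‖Complex.exp (-(Complex.I * (a : ℂ) * (b : ℂ) ^ 2))‖ = 1 :=
  norm_cexp_eq_one (by simp [pow_two, Complex.mul_re, Complex.mul_im])

/-- `min 1 s ≤ s^(1/20)` for `0 ≤ s`. -/
lemma min_one_le_rpow {s : ℝ} (hs : 0 ≤ s) : min 1 s ≤ s ^ ((1:ℝ)/20) := by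
  rcases eq_or_lt_of_le hs with h | h
  · simp [← h]
  rcases le_total s 1 with h1 | h1
  · calc min 1 s ≤ s := min_le_right _ _
    _ = s ^ (1:ℝ) := (Real.rpow_one s).symm
    _ ≤ s ^ ((1:ℝ)/20) := Real.rpow_le_rpow_of_exponent_ge h h1 (by norm_num)
  · calc min 1 s ≤ 1 := min_le_left _ _
    _ ≤ s ^ ((1:ℝ)/20) := Real.one_le_rpow h1 (by norm_num)

/-- `‖e^{iθ} - 1‖ ≤ 2 * min 1 |θ|`. -/
lemma norm_cexp_I_sub_one_le (θ : ℝ) :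
    ‖Complex.exp (Complex.I * (θ : ℂ)) - 1‖ ≤ 2 * min 1 |θ| := by
  rcases le_total |θ| 1 with h | h
  · have h2 : ‖Complex.I * (θ : ℂ)‖ ≤ 1 := by
      simpa using h
    have := Complex.norm_exp_sub_one_le h2
    rw [min_eq_right h]
    simpa using this
  · rw [min_eq_left h]
    calc ‖Complex.exp (Complex.I * (θ : ℂ)) - 1‖
        ≤ ‖Complex.exp (Complex.I * (θ : ℂ))‖ + ‖(1:ℂ)‖ := norm_sub_le _ _
      _ ≤ 2 * 1 := by rw [norm_cexp_I_mul_ofReal]; norm_num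

/-- Pointwise bound by the (finite) `L^∞` norm for continuous functions. -/
lemma norm_le_eLpNormTop_toReal {g : ℝ → ℂ} (hg : Continuous g)
    (hfin : eLpNorm g ⊤ (volume : Measure ℝ) ≠ ⊤) (ξ : ℝ) :
    ‖g ξ‖ ≤ (eLpNorm g ⊤ (volume : Measure ℝ)).toReal := by
  by_contra hlt
  push_neg at hlt
  set r := (eLpNorm g ⊤ (volume : Measure ℝ)).toReal with hr
  have hae : ∀ᵐ y : ℝ, ‖g y‖ ≤ r := by
    have h1 := enorm_ae_le_eLpNormEssSup g (volume : Measure ℝ)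
    rw [eLpNorm_exponent_top] at hfin hr
    filter_upwards [h1] with y hy
    have : (‖g y‖ₑ).toReal ≤ r := by
      rw [hr]; exact ENNReal.toReal_mono hfin hy
    simpa using this
  have hopen : IsOpen {y : ℝ | r < ‖g y‖} := isOpen_lt continuous_const hg.norm
  have hpos : 0 < (volume : Measure ℝ) {y : ℝ | r < ‖g y‖} :=
    hopen.measure_pos _ ⟨ξ, hlt⟩
  have : (volume : Measure ℝ) {y : ℝ | r < ‖g y‖} = 0 := by
    rw [ae_iff] at hae
    simpa [not_le] using hae
  rw [this] at hpos
  exact lt_irrefl _ hpos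



/-- The weight `w(y) = |y|^{1/10} / sqrt(1+y²)` is in `L²(ℝ)`. -/
lemma memLp_weight :
    MemLp (fun y : ℝ => |y| ^ ((1:ℝ)/10) * (Real.sqrt (1 + y ^ 2))⁻¹) 2
      (volume : Measure ℝ) := by
  have hmeas : AEStronglyMeasurable
      (fun y : ℝ => |y| ^ ((1:ℝ)/10) * (Real.sqrt (1 + y ^ 2))⁻¹) (volume : Measure ℝ) := by
    apply Measurable.aestronglyMeasurable
    fun_prop
  rw [memLp_two_iff_integrable_sq hmeas]
  have hbound : ∀ y : ℝ,
      (|y| ^ ((1:ℝ)/10) * (Real.sqrt (1 + y ^ 2))⁻¹) ^ 2 ≤ 2 * (1 + ‖y‖) ^ (-(9:ℝ)/5) := by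
    intro y
    have h0 : 0 ≤ 1 + y ^ 2 := by positivity
    have hsq : ((Real.sqrt (1 + y ^ 2))⁻¹) ^ 2 = (1 + y ^ 2)⁻¹ := by
      rw [inv_pow, Real.sq_sqrt h0]
    have hab : (|y| ^ ((1:ℝ)/10)) ^ 2 = |y| ^ ((1:ℝ)/5) := by
      rw [← Real.rpow_natCast (|y| ^ ((1:ℝ)/10)) 2, ← Real.rpow_mul (abs_nonneg y)]
      norm_num
    rw [mul_pow, hsq, hab]
    have h1 : |y| ^ ((1:ℝ)/5) ≤ (1 + |y|) ^ ((1:ℝ)/5) :=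
      Real.rpow_le_rpow (abs_nonneg y) (by linarith [abs_nonneg y]) (by norm_num)
    have h2 : (1 + y ^ 2)⁻¹ ≤ 2 * ((1 + |y|) ^ ((2:ℝ)))⁻¹ := by
      have hsq2 : (1 + |y|) ^ ((2:ℝ)) = (1 + |y|) ^ (2:ℕ) := by
        rw [← Real.rpow_natCast (1 + |y|) 2]; norm_num
      have hkey : (1 + |y|) ^ (2:ℕ) ≤ 2 * (1 + y ^ 2) := by
        nlinarith [sq_nonneg (|y| - 1), _root_.sq_abs y]
      have p1 : (0:ℝ) < 1 + y ^ 2 := by positivity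
      have p2 : (0:ℝ) < (1 + |y|) ^ (2:ℕ) := by positivity
      rw [hsq2, ← one_div, ← div_eq_mul_inv, div_le_div_iff₀ p1 p2]
      linarith
    calc |y| ^ ((1:ℝ)/5) * (1 + y ^ 2)⁻¹
        ≤ (1 + |y|) ^ ((1:ℝ)/5) * (2 * ((1 + |y|) ^ ((2:ℝ)))⁻¹) := by
          apply mul_le_mul h1 h2 (by positivity) (by positivity)
      _ = 2 * (1 + ‖y‖) ^ (-(9:ℝ)/5) := by
          rw [← Real.rpow_neg (by positivity : (0:ℝ) ≤ 1 + |y|) (2:ℝ)]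
          rw [mul_comm, mul_assoc, ← Real.rpow_add (by positivity : (0:ℝ) < 1 + |y|)]
          norm_num [Real.norm_eq_abs]
  have hint : Integrable (fun y : ℝ => 2 * (1 + ‖y‖) ^ (-(9:ℝ)/5)) (volume : Measure ℝ) := by
    have : ((Module.finrank ℝ ℝ : ℝ)) < (9:ℝ)/5 := by
      norm_num [Module.finrank_self]
    have h := integrable_one_add_norm (E := ℝ) (μ := volume) (r := (9:ℝ)/5) this
    simpa [neg_div] using h.const_mul 2
  apply hint.mono'
  · exact (hmeas.mul hmeas).congr (by
      filter_upwards with y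
      simp [pow_two])
  · filter_upwards with y
    have h0 : (0:ℝ) ≤ (|y| ^ ((1:ℝ)/10) * (Real.sqrt (1 + y ^ 2))⁻¹) ^ 2 := sq_nonneg _
    rw [Real.norm_eq_abs, _root_.abs_of_nonneg h0]
    exact hbound y

/-- `(sqrt(1+y²))⁻¹` (as a complex-valued function) is in `L²(ℝ)`. -/
lemma memLp_inv_sqrt :
    MemLp (fun y : ℝ => ((Real.sqrt (1 + y ^ 2) : ℂ))⁻¹) 2 (volume : Measure ℝ) := by
  have hcont : Continuous fun y : ℝ => ((Real.sqrt (1 + y ^ 2) : ℂ))⁻¹ := by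
    apply Continuous.inv₀
    · exact Complex.continuous_ofReal.comp (Real.continuous_sqrt.comp (by continuity))
    · intro y
      simp only [ne_eq, Complex.ofReal_eq_zero]
      positivity
  rw [memLp_two_iff_integrable_sq_norm hcont.aestronglyMeasurable]
  have : ∀ y : ℝ, ‖((Real.sqrt (1 + y ^ 2) : ℂ))⁻¹‖ ^ 2 = (1 + y ^ 2)⁻¹ := by
    intro y
    have h0 : (0:ℝ) ≤ 1 + y ^ 2 := by positivity
    rw [norm_inv, Complex.norm_real, Real.norm_eq_abs,
      _root_.abs_of_nonneg (Real.sqrt_nonneg _), inv_pow, Real.sq_sqrt h0]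
  simp only [this]
  exact integrable_inv_one_add_sq



lemma norm_cexp_eq_one'' {z : ℂ} (hz : z.re = 0) : ‖Complex.exp z‖ = 1 := by
  rw [Complex.norm_exp, hz, Real.exp_zero]

lemma norm_gauss_factor_le_one {b : ℂ} (hb : 0 ≤ b.re) (r : ℝ) :
    ‖Complex.exp (((r:ℂ)) ^ 2 * (-(4 * b)⁻¹))‖ ≤ 1 := by
  rw [Complex.norm_exp]
  have hre : (((r:ℂ)) ^ 2 * (-(4 * b)⁻¹)).re = r ^ 2 * (-(4 * b)⁻¹).re := by
    rw [show ((r:ℂ)) ^ 2 = ((r ^ 2 : ℝ) : ℂ) by push_cast; ring]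
    exact Complex.re_ofReal_mul _ _
  have h4b : (0:ℝ) ≤ ((4 * b)⁻¹).re := by
    rw [Complex.inv_re]
    apply div_nonneg _ (Complex.normSq_nonneg _)
    have : ((4:ℂ) * b).re = 4 * b.re := by
      simp [Complex.mul_re]
    rw [this]; linarith
  have hle : (((r:ℂ)) ^ 2 * (-(4 * b)⁻¹)).re ≤ 0 := by
    rw [hre, Complex.neg_re]
    have : (0:ℝ) ≤ r ^ 2 * ((4*b)⁻¹).re := mul_nonneg (sq_nonneg r) h4b
    linarith
  calc Real.exp _ ≤ Real.exp 0 := Real.exp_le_exp.mpr hle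
    _ = 1 := Real.exp_zero

lemma quad_exponent_eq {z w : ℂ} (hw : w ≠ 0) :
    (0:ℂ) - (Complex.I * z) ^ 2 / (4 * -w) = z ^ 2 * (-(4 * w)⁻¹) := by
  have h4 : (4:ℂ) * w ≠ 0 := mul_ne_zero (by norm_num) hw
  field_simp
  rw [Complex.I_sq]
  ring

lemma integrable_kernel_prod {f : ℝ → ℂ} (hfint : Integrable f (volume : Measure ℝ))
    {b : ℂ} {x e : ℝ} (he0 : 0 < e) (hbe : b.re = -e) :
    Integrable (Function.uncurry fun (ξ y : ℝ) =>
        Complex.exp (b * (ξ:ℂ) ^ 2 + (Complex.I * ((y:ℂ) - x)) * ξ + 0) * f y)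
      ((volume : Measure ℝ).prod (volume : Measure ℝ)) := by
  have hmajor : Integrable (fun z : ℝ × ℝ => Real.exp (-e * z.1 ^ 2) * ‖f z.2‖)
      ((volume : Measure ℝ).prod (volume : Measure ℝ)) :=
    (integrable_exp_neg_mul_sq he0).mul_prod hfint.norm
  have hcont : Continuous fun z : ℝ × ℝ =>
      Complex.exp (b * (z.1:ℂ) ^ 2 + (Complex.I * ((z.2:ℂ) - x)) * z.1 + 0) := by
    apply Complex.continuous_exp.comp
    apply Continuous.add
    apply Continuous.add
    · exact continuous_const.mul ((Complex.continuous_ofReal.comp continuous_fst).pow 2)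
    · exact (continuous_const.mul
        ((Complex.continuous_ofReal.comp continuous_snd).sub continuous_const)).mul
        (Complex.continuous_ofReal.comp continuous_fst)
    · exact continuous_const
  apply hmajor.mono'
  · exact hcont.aestronglyMeasurable.mul hfint.aestronglyMeasurable.comp_snd
  · filter_upwards with z
    show ‖Complex.exp (b * (z.1:ℂ) ^ 2 + (Complex.I * ((z.2:ℂ) - x)) * z.1 + 0) * f z.2‖ ≤ _
    rw [norm_mul, Complex.norm_exp]
    have hre2 : (b * (z.1:ℂ) ^ 2 + (Complex.I * ((z.2:ℂ) - x)) * z.1 + 0).re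
        = b.re * z.1 ^ 2 := by
      simp [pow_two, Complex.mul_re, Complex.mul_im, Complex.add_re]
    rw [hre2, hbe]

/-- Core identity: the Schrödinger integral equals a Fresnel-type kernel integral. -/
lemma core_identity {f : ℝ → ℂ} (hfint : Integrable f (volume : Measure ℝ))
    {h : ℝ → ℂ} {t x : ℝ} (ht : 1 ≤ t)
    (hdef : ∀ ξ : ℝ, h ξ = ((2 * Real.pi) ^ (-(1 : ℝ)/2)) •
      ∫ y : ℝ, Complex.exp (Complex.I * y * ξ) * f y)
    (hI : Integrable h (volume : Measure ℝ)) :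
    ∫ ξ : ℝ, Complex.exp (-(Complex.I * x * ξ)) *
        (Complex.exp (-(Complex.I * t * (ξ:ℂ) ^ 2)) * h ξ)
      = ((2 * Real.pi) ^ (-(1 : ℝ)/2) : ℝ) •
        (((Real.pi : ℂ) / (Complex.I * t)) ^ ((1:ℂ)/2) *
          ∫ y : ℝ, Complex.exp (((y:ℂ) - x) ^ 2 * (-(4 * (Complex.I * t))⁻¹)) * f y) := by
  have ht0 : (0:ℝ) < t := lt_of_lt_of_le one_pos ht
  set c : ℝ := (2 * Real.pi) ^ (-(1 : ℝ)/2) with hc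
  have hc0 : 0 < c := Real.rpow_pos_of_pos (by positivity) _
  have hIt0 : (Complex.I * (t:ℂ)) ≠ 0 :=
    mul_ne_zero Complex.I_ne_zero (Complex.ofReal_ne_zero.mpr ht0.ne')
  have him : ((Real.pi : ℂ) / (Complex.I * t)).im ≠ 0 := by
    rw [Complex.div_im]
    have h1 : ((Real.pi : ℂ)).im = 0 := rfl
    have h2 : ((Real.pi : ℂ)).re = Real.pi := rfl
    have h3 : (Complex.I * (t:ℂ)).re = 0 := by simp
    have h4 : (Complex.I * (t:ℂ)).im = t := by simp
    have h5 : Complex.normSq (Complex.I * (t:ℂ)) = t ^ 2 := by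
      simp [Complex.normSq_apply, pow_two, Complex.mul_re, Complex.mul_im]
    rw [h1, h2, h3, h4, h5]
    simp only [zero_mul, zero_div, zero_sub, ne_eq, neg_eq_zero]
    intro hcon
    rw [div_eq_zero_iff] at hcon
    rcases hcon with hcc | hcc
    · have := Real.pi_pos; nlinarith
    · nlinarith
  have hslit : ((Real.pi : ℂ) / (Complex.I * t)) ∈ Complex.slitPlane :=
    Complex.mem_slitPlane_iff.mpr (Or.inr him)
  set T : ℝ → ℂ := fun ξ =>
    Complex.exp (-(Complex.I * t * (ξ:ℂ) ^ 2) - Complex.I * x * ξ) * ((c⁻¹ : ℝ) • h ξ)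
    with hTdef
  have hTapp : ∀ ξ : ℝ, T ξ =
      Complex.exp (-(Complex.I * t * (ξ:ℂ) ^ 2) - Complex.I * x * ξ) * ((c⁻¹ : ℝ) • h ξ) :=
    fun ξ => by rw [hTdef]
  -- continuity of h
  have hcont_int : Continuous fun ξ : ℝ => ∫ y : ℝ, Complex.exp (Complex.I * y * ξ) * f y := by
    apply continuous_of_dominated (bound := fun y => ‖f y‖)
    · intro ξ
      exact ((Complex.continuous_exp.comp (by continuity)).aestronglyMeasurable).mul
        hfint.aestronglyMeasurable
    · intro ξ
      filter_upwards with y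
      rw [norm_mul, norm_cexp_eq_one'' (by simp), one_mul]
    · exact hfint.norm
    · filter_upwards with y
      exact (Complex.continuous_exp.comp (by continuity)).mul continuous_const
  have hcont_h : Continuous h := by
    have hcc : Continuous fun ξ : ℝ =>
        (c : ℝ) • ∫ y : ℝ, Complex.exp (Complex.I * y * ξ) * f y := hcont_int.const_smul c
    exact hcc.congr fun ξ => (hdef ξ).symm
  have hcont_T : Continuous T := by
    rw [hTdef]
    exact (Complex.continuous_exp.comp (by continuity)).mul (by fun_prop)
  have hTnorm : ∀ ξ : ℝ, ‖T ξ‖ = c⁻¹ * ‖h ξ‖ := by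
    intro ξ
    rw [hTapp ξ, norm_mul,
      norm_cexp_eq_one'' (by simp [pow_two, Complex.mul_re, Complex.mul_im]),
      one_mul, norm_smul, Real.norm_eq_abs, _root_.abs_of_pos (inv_pos.mpr hc0)]
  -- T as an integral in y
  have hT_y : ∀ ξ : ℝ, T ξ = ∫ y : ℝ,
      Complex.exp (-(Complex.I * t * (ξ:ℂ) ^ 2) - Complex.I * x * ξ) *
        (Complex.exp (Complex.I * y * ξ) * f y) := by
    intro ξ
    rw [hTapp ξ, integral_const_mul]
    congr 1
    rw [hdef ξ, inv_smul_smul₀ hc0.ne']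
  -- approximating sequence
  set ε : ℕ → ℝ := fun n => 1 / (n + 1) with hε
  have hεpos : ∀ n, 0 < ε n := fun n => by rw [hε]; positivity
  have hεto0 : Tendsto ε atTop (𝓝 0) := tendsto_one_div_add_atTop_nhds_zero_nat
  set A : ℕ → ℂ := fun n => ∫ ξ : ℝ, Complex.exp (-(ε n : ℂ) * (ξ:ℂ) ^ 2) * T ξ with hA
  have hAapp : ∀ n, A n = ∫ ξ : ℝ, Complex.exp (-(ε n : ℂ) * (ξ:ℂ) ^ 2) * T ξ :=
    fun n => by rw [hA]
  -- limit of A is ∫ T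
  have limit1 : Tendsto A atTop (𝓝 (∫ ξ : ℝ, T ξ)) := by
    apply tendsto_integral_filter_of_dominated_convergence (bound := fun ξ => c⁻¹ * ‖h ξ‖)
    · filter_upwards with n
      exact ((Complex.continuous_exp.comp (by continuity)).mul hcont_T).aestronglyMeasurable
    · filter_upwards with n
      filter_upwards with ξ
      rw [norm_mul, hTnorm ξ]
      have h1 : ‖Complex.exp (-(ε n : ℂ) * (ξ:ℂ) ^ 2)‖ ≤ 1 := by
        rw [Complex.norm_exp]
        have hre1 : ((-(ε n : ℂ)) * (ξ:ℂ) ^ 2).re = -(ε n * ξ ^ 2) := by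
          rw [show ((ξ:ℂ)) ^ 2 = ((ξ ^ 2 : ℝ) : ℂ) by push_cast; ring,
            show (-(ε n : ℂ)) = ((-(ε n) : ℝ) : ℂ) by push_cast; ring, ← Complex.ofReal_mul]
          rw [Complex.ofReal_re]
          ring
        rw [hre1]
        calc Real.exp _ ≤ Real.exp 0 := Real.exp_le_exp.mpr (by
              have : (0:ℝ) ≤ ε n * ξ ^ 2 := mul_nonneg (hεpos n).le (sq_nonneg _)
              linarith)
          _ = 1 := Real.exp_zero
      calc ‖Complex.exp (-(ε n : ℂ) * (ξ:ℂ) ^ 2)‖ * (c⁻¹ * ‖h ξ‖)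
          ≤ 1 * (c⁻¹ * ‖h ξ‖) :=
            mul_le_mul_of_nonneg_right h1 (by positivity)
        _ = c⁻¹ * ‖h ξ‖ := one_mul _
    · exact hI.norm.const_mul _
    · filter_upwards with ξ
      have h2 : Tendsto (fun n => Complex.exp (-(ε n : ℂ) * (ξ:ℂ) ^ 2)) atTop (𝓝 1) := by
        have h3 : Tendsto (fun n => ((ε n : ℝ) : ℂ)) atTop (𝓝 ((0:ℝ):ℂ)) :=
          (Complex.continuous_ofReal.tendsto 0).comp hεto0
        have hco : Tendsto (fun n => -(ε n : ℂ) * (ξ:ℂ) ^ 2) atTop (𝓝 0) := by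
          have := (h3.neg).mul_const ((ξ:ℂ) ^ 2)
          simpa using this
        have := (Complex.continuous_exp.tendsto 0).comp hco
        simpa [Function.comp_def] using this
      simpa using h2.mul_const (T ξ)
  -- closed form of A n
  have limit2 : ∀ n, A n = ((Real.pi : ℂ) / ((ε n : ℂ) + Complex.I * t)) ^ ((1:ℂ)/2) *
      ∫ y : ℝ, Complex.exp (((y:ℂ) - x) ^ 2 * (-(4 * ((ε n : ℂ) + Complex.I * t))⁻¹)) * f y := by
    intro n
    have he0 : 0 < ε n := hεpos n
    set e : ℝ := ε n with he
    set b : ℂ := -((e:ℂ) + Complex.I * t) with hb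
    have hbre : b.re < 0 := by
      rw [hb]
      simp only [Complex.neg_re, Complex.add_re, Complex.ofReal_re, Complex.mul_re,
        Complex.I_re, Complex.I_im, Complex.ofReal_im, Complex.ofReal_re]
      simp only [zero_mul, one_mul, mul_zero, sub_zero, zero_sub]
      linarith
    have hbne : ((e:ℂ) + Complex.I * t) ≠ 0 := by
      intro hcon
      have hre := congrArg Complex.re hcon
      simp at hre
      linarith
    have hexp : ∀ (ξ y : ℝ),
        Complex.exp (-(e:ℂ) * (ξ:ℂ) ^ 2) *
          (Complex.exp (-(Complex.I * t * (ξ:ℂ) ^ 2) - Complex.I * x * ξ) *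
            (Complex.exp (Complex.I * y * ξ) * f y))
        = Complex.exp (b * (ξ:ℂ) ^ 2 + (Complex.I * ((y:ℂ) - x)) * ξ + 0) * f y := by
      intro ξ y
      rw [show Complex.exp (b * (ξ:ℂ) ^ 2 + (Complex.I * ((y:ℂ) - x)) * ξ + 0) =
          Complex.exp (-(e:ℂ) * (ξ:ℂ) ^ 2) *
            (Complex.exp (-(Complex.I * t * (ξ:ℂ) ^ 2) - Complex.I * x * ξ) *
              Complex.exp (Complex.I * y * ξ)) from ?_]
      · ring
      · rw [← Complex.exp_add, ← Complex.exp_add]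
        congr 1
        rw [hb]; ring
    have step1 : A n = ∫ ξ : ℝ, ∫ y : ℝ,
        Complex.exp (b * (ξ:ℂ) ^ 2 + (Complex.I * ((y:ℂ) - x)) * ξ + 0) * f y := by
      rw [hAapp n]
      congr 1
      funext ξ
      rw [hT_y ξ, ← integral_const_mul]
      congr 1
      funext y
      exact hexp ξ y
    have hbe : b.re = -e := by
      rw [hb]
      simp [Complex.mul_re]
    have hprod := integrable_kernel_prod hfint (x := x) he0 hbe
    have step2 : A n = ∫ y : ℝ, (∫ ξ : ℝ,
        Complex.exp (b * (ξ:ℂ) ^ 2 + (Complex.I * ((y:ℂ) - x)) * ξ + 0)) * f y := by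
      rw [step1, integral_integral_swap hprod]
      congr 1
      funext y
      rw [integral_mul_const]
    have step3 : A n = ∫ y : ℝ, (((Real.pi : ℂ) / -b) ^ ((1:ℂ)/2 : ℂ) *
        Complex.exp (0 - (Complex.I * ((y:ℂ) - x)) ^ 2 / (4 * b))) * f y := by
      rw [step2]
      congr 1
      funext y
      rw [integral_cexp_quadratic hbre]
    have hexp2 : ∀ y : ℝ, (0 : ℂ) - (Complex.I * ((y:ℂ) - x)) ^ 2 / (4 * b)
        = ((y:ℂ) - x) ^ 2 * (-(4 * ((e:ℂ) + Complex.I * t))⁻¹) := by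
      intro y
      rw [hb]
      exact quad_exponent_eq hbne
    have hnegb : -b = (e:ℂ) + Complex.I * t := by rw [hb]; ring
    rw [step3, ← integral_const_mul]
    congr 1
    funext y
    rw [hexp2 y, hnegb]
    ring
  -- limit of right-hand sides
  have hz : Tendsto (fun n => ((ε n : ℝ) : ℂ) + Complex.I * t) atTop (𝓝 (Complex.I * t)) := by
    have h3 : Tendsto (fun n => ((ε n : ℝ) : ℂ)) atTop (𝓝 ((0:ℝ):ℂ)) :=
      (Complex.continuous_ofReal.tendsto 0).comp hεto0
    have := h3.add_const (Complex.I * (t:ℂ))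
    simpa using this
  have hdiv : Tendsto (fun n => (Real.pi : ℂ) / (((ε n : ℝ):ℂ) + Complex.I * t)) atTop
      (𝓝 ((Real.pi : ℂ) / (Complex.I * t))) := tendsto_const_nhds.div hz hIt0
  have limitInt : Tendsto (fun n => ∫ y : ℝ,
      Complex.exp (((y:ℂ) - x) ^ 2 * (-(4 * (((ε n : ℝ):ℂ) + Complex.I * t))⁻¹)) * f y) atTop
      (𝓝 (∫ y : ℝ, Complex.exp (((y:ℂ) - x) ^ 2 * (-(4 * (Complex.I * t))⁻¹)) * f y)) := by
    apply tendsto_integral_filter_of_dominated_convergence (bound := fun y => ‖f y‖)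
    · filter_upwards with n
      exact ((Complex.continuous_exp.comp (by continuity)).aestronglyMeasurable).mul
        hfint.aestronglyMeasurable
    · filter_upwards with n
      filter_upwards with y
      rw [norm_mul, show ((y:ℂ) - (x:ℂ)) = (((y - x : ℝ)):ℂ) by push_cast; ring]
      have hbnn : (0:ℝ) ≤ ((((ε n : ℝ)):ℂ) + Complex.I * t).re := by
        simp [(hεpos n).le]
      calc ‖Complex.exp ((((y - x : ℝ):ℂ)) ^ 2 * (-(4 * (((ε n : ℝ):ℂ) + Complex.I * t))⁻¹))‖
            * ‖f y‖
          ≤ 1 * ‖f y‖ :=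
            mul_le_mul_of_nonneg_right (norm_gauss_factor_le_one hbnn _) (norm_nonneg _)
        _ = ‖f y‖ := one_mul _
    · exact hfint.norm
    · filter_upwards with y
      have hcA : ContinuousAt (fun w : ℂ =>
          Complex.exp (((y:ℂ) - x) ^ 2 * (-(4 * w)⁻¹)) * f y) (Complex.I * t) := by
        apply ContinuousAt.mul _ continuousAt_const
        apply ContinuousAt.comp Complex.continuous_exp.continuousAt
        apply ContinuousAt.mul continuousAt_const
        apply ContinuousAt.neg
        apply ContinuousAt.inv₀ (continuousAt_const.mul continuousAt_id)
        exact mul_ne_zero (by norm_num) hIt0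
      exact hcA.tendsto.comp hz
  have limit3 : Tendsto A atTop (𝓝 (((Real.pi : ℂ) / (Complex.I * t)) ^ ((1:ℂ)/2) *
      ∫ y : ℝ, Complex.exp (((y:ℂ) - x) ^ 2 * (-(4 * (Complex.I * t))⁻¹)) * f y)) := by
    have hcpow : Tendsto
        (fun n => ((Real.pi : ℂ) / (((ε n : ℝ):ℂ) + Complex.I * t)) ^ ((1:ℂ)/2))
        atTop (𝓝 (((Real.pi : ℂ) / (Complex.I * t)) ^ ((1:ℂ)/2))) :=
      (continuousAt_cpow_const hslit).tendsto.comp hdiv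
    exact (hcpow.mul limitInt).congr fun n => (limit2 n).symm
  have hTint : ∫ ξ : ℝ, T ξ = ((Real.pi : ℂ) / (Complex.I * t)) ^ ((1:ℂ)/2) *
      ∫ y : ℝ, Complex.exp (((y:ℂ) - x) ^ 2 * (-(4 * (Complex.I * t))⁻¹)) * f y :=
    tendsto_nhds_unique limit1 limit3
  -- conclude
  have hS : (fun ξ : ℝ => Complex.exp (-(Complex.I * x * ξ)) *
      (Complex.exp (-(Complex.I * t * (ξ:ℂ) ^ 2)) * h ξ)) = fun ξ => c • T ξ := by
    funext ξ
    rw [hTapp ξ, Complex.real_smul, Complex.real_smul, Complex.ofReal_inv]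
    rw [show Complex.exp (-(Complex.I * t * (ξ:ℂ) ^ 2) - Complex.I * x * ξ)
        = Complex.exp (-(Complex.I * x * ξ)) * Complex.exp (-(Complex.I * t * (ξ:ℂ) ^ 2)) by
      rw [← Complex.exp_add]; ring_nf]
    have hcne : ((c:ℝ):ℂ) ≠ 0 := Complex.ofReal_ne_zero.mpr hc0.ne'
    field_simp
  rw [hS, integral_smul, hTint]



/-- Cauchy–Schwarz for real integrals via `eLpNorm`. -/
lemma integral_mul_le_L2norms {w g : ℝ → ℝ} (hw : MemLp w 2 (volume : Measure ℝ))
    (hg : MemLp g 2 (volume : Measure ℝ)) :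
    ∫ y : ℝ, w y * g y ≤ (eLpNorm w 2 (volume : Measure ℝ)).toReal *
      (eLpNorm g 2 (volume : Measure ℝ)).toReal := by
  have hwg : AEStronglyMeasurable (fun y => w y * g y) (volume : Measure ℝ) := hw.1.mul hg.1
  have hpqr : (1:ℝ≥0∞)/1 = 1/2 + 1/2 := by
    rw [ENNReal.add_halves]; norm_num
  have hhold : eLpNorm (fun y => w y * g y) 1 (volume : Measure ℝ)
      ≤ eLpNorm w 2 (volume : Measure ℝ) * eLpNorm g 2 (volume : Measure ℝ) :=
    by simpa using eLpNorm_le_eLpNorm_mul_eLpNorm'_of_norm (p := 2) (q := 2) (r := 1) hw.1 hg.1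
        (fun a b => a * b) 1
        (Filter.Eventually.of_forall fun y => by simp [norm_mul])
  have h1 : ∫ y : ℝ, w y * g y ≤ ∫ y : ℝ, ‖w y * g y‖ :=
    le_trans (le_abs_self _) (by
      rw [← Real.norm_eq_abs]
      exact norm_integral_le_integral_norm _)
  have h2 : ∫ y : ℝ, ‖w y * g y‖ = (eLpNorm (fun y => w y * g y) 1 (volume : Measure ℝ)).toReal := by
    rw [integral_norm_eq_lintegral_enorm hwg, eLpNorm_one_eq_lintegral_enorm]
  have hfin : eLpNorm w 2 (volume : Measure ℝ) * eLpNorm g 2 (volume : Measure ℝ) ≠ ⊤ :=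
    ENNReal.mul_ne_top hw.2.ne hg.2.ne
  calc ∫ y : ℝ, w y * g y ≤ ∫ y : ℝ, ‖w y * g y‖ := h1
    _ = (eLpNorm (fun y => w y * g y) 1 (volume : Measure ℝ)).toReal := h2
    _ ≤ (eLpNorm w 2 (volume : Measure ℝ) * eLpNorm g 2 (volume : Measure ℝ)).toReal :=
        ENNReal.toReal_mono hfin hhold
    _ = _ := ENNReal.toReal_mul

/-- If the Schrödinger integrand is integrable, so is `h`. -/
lemma integrand_recover {x t : ℝ} {h : ℝ → ℂ}
    (hS : Integrable (fun ξ : ℝ => Complex.exp (-(Complex.I * x * ξ)) *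
      (Complex.exp (-(Complex.I * t * (ξ:ℂ) ^ 2)) * h ξ)) (volume : Measure ℝ)) :
    Integrable h (volume : Measure ℝ) := by
  have hu : Continuous fun ξ : ℝ => Complex.exp (Complex.I * x * ξ + Complex.I * t * (ξ:ℂ) ^ 2) :=
    Complex.continuous_exp.comp (by continuity)
  have h2 := hS.bdd_mul (c := 1) hu.aestronglyMeasurable (ae_of_all _ fun ξ => by
    rw [norm_cexp_eq_one (by simp [pow_two, Complex.mul_re, Complex.mul_im])])
  apply h2.congr
  filter_upwards with ξ
  have hprod : Complex.exp (Complex.I * x * ξ + Complex.I * t * (ξ:ℂ) ^ 2) *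
      Complex.exp (-(Complex.I * x * ξ)) * Complex.exp (-(Complex.I * t * (ξ:ℂ) ^ 2)) = 1 := by
    rw [← Complex.exp_add, ← Complex.exp_add,
      show Complex.I * x * ξ + Complex.I * t * (ξ:ℂ) ^ 2 + -(Complex.I * x * ξ)
        + -(Complex.I * t * (ξ:ℂ) ^ 2) = 0 by ring, Complex.exp_zero]
  calc Complex.exp (Complex.I * x * ξ + Complex.I * t * (ξ:ℂ) ^ 2) *
        (Complex.exp (-(Complex.I * x * ξ)) * (Complex.exp (-(Complex.I * t * (ξ:ℂ) ^ 2)) * h ξ))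
      = (Complex.exp (Complex.I * x * ξ + Complex.I * t * (ξ:ℂ) ^ 2) *
          Complex.exp (-(Complex.I * x * ξ)) * Complex.exp (-(Complex.I * t * (ξ:ℂ) ^ 2))) * h ξ := by
        ring
    _ = h ξ := by rw [hprod, one_mul]

lemma split_exponent {x t : ℝ} (ht0 : 0 < t) (y : ℝ) :
    ((y:ℂ) - x) ^ 2 * (-(4 * (Complex.I * (t:ℂ)))⁻¹)
      = Complex.I * ((x ^ 2 / (4*t) : ℝ) : ℂ) +
        (Complex.I * (y:ℂ) * ((-(x/(2*t)) : ℝ) : ℂ) + Complex.I * ((y ^ 2 / (4*t) : ℝ) : ℂ)) := by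
  have htne : ((t:ℝ):ℂ) ≠ 0 := Complex.ofReal_ne_zero.mpr ht0.ne'
  have h4 : (4:ℂ) * (Complex.I * t) ≠ 0 :=
    mul_ne_zero (by norm_num) (mul_ne_zero Complex.I_ne_zero htne)
  push_cast
  field_simp
  ring_nf
  rw [Complex.I_sq]
  ring


lemma one_div_one_eq : (1:ℝ≥0∞)/1 = 1/2 + 1/2 := by
  rw [ENNReal.add_halves]; norm_num

/-- Continuity of the Fourier transform of an integrable function. -/
lemma FT_continuous {f : ℝ → ℂ} (hfint : Integrable f (volume : Measure ℝ)) :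
    Continuous (FT f) := by
  have hcont_int : Continuous fun ξ : ℝ => ∫ y : ℝ, Complex.exp (Complex.I * y * ξ) * f y := by
    apply continuous_of_dominated (bound := fun y => ‖f y‖)
    · intro ξ
      exact ((Complex.continuous_exp.comp (by continuity)).aestronglyMeasurable).mul
        hfint.aestronglyMeasurable
    · intro ξ
      filter_upwards with y
      rw [norm_mul, norm_cexp_eq_one (by simp), one_mul]
    · exact hfint.norm
    · filter_upwards with y
      exact (Complex.continuous_exp.comp (by continuity)).mul continuous_const
  exact hcont_int.const_smul ((2 * Real.pi) ^ (-(1 : ℝ)/2) : ℝ)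

/-- The oscillation bound: `2 min(1,|y²/(4t)|) ≤ 2 (4t)^{-1/20} |y|^{1/10}`. -/
lemma min_bound {t : ℝ} (ht0 : 0 < t) (y : ℝ) :
    2 * min 1 |y ^ 2 / (4*t)| ≤ 2 * (4*t) ^ (-(1:ℝ)/20) * |y| ^ ((1:ℝ)/10) := by
  have h40 : (0:ℝ) < 4*t := by linarith
  have habs : |y ^ 2 / (4*t)| = y ^ 2 / (4*t) := _root_.abs_of_nonneg (by positivity)
  have h1 : min 1 (y ^ 2 / (4*t)) ≤ (y ^ 2 / (4*t)) ^ ((1:ℝ)/20) :=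
    min_one_le_rpow (by positivity)
  have h2 : (y ^ 2 / (4*t)) ^ ((1:ℝ)/20) = (4*t) ^ (-(1:ℝ)/20) * |y| ^ ((1:ℝ)/10) := by
    rw [Real.div_rpow (sq_nonneg y) h40.le, ← _root_.sq_abs y, ← Real.rpow_natCast |y| 2,
      ← Real.rpow_mul (abs_nonneg y), div_eq_mul_inv, ← Real.rpow_neg h40.le]
    rw [show ((2:ℕ):ℝ) * ((1:ℝ)/20) = (1:ℝ)/10 by norm_num,
      show -((1:ℝ)/20) = -(1:ℝ)/20 by norm_num]
    ring
  rw [habs]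
  calc 2 * min 1 (y ^ 2 / (4*t)) ≤ 2 * ((y ^ 2 / (4*t)) ^ ((1:ℝ)/20)) := by linarith
    _ = 2 * (4*t) ^ (-(1:ℝ)/20) * |y| ^ ((1:ℝ)/10) := by rw [h2]; ring

lemma exp_split_eq (a b c v : ℂ) :
    Complex.exp (a + (b + c)) * v
      = (Complex.exp a * Complex.exp b) * v
        + ((Complex.exp a * Complex.exp b) * (Complex.exp c - 1)) * v := by
  rw [Complex.exp_add, Complex.exp_add]
  ring


end LPDaux

/-- Linear pointwise decay estimate:
`‖e^{itΔ}f‖_{L^∞} ≤ C t^{-1/2}(‖𝓕f‖_{L^∞} + t^{-1/20}‖⟨x⟩f‖_{L²})` for `t ≥ 1`. -/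
theorem linear_pointwise_decay
    : ∃ C > (0:ℝ), ∀ f : ℝ → ℂ,
      MemLp (fun x : ℝ => (Real.sqrt (1 + x ^ 2) : ℂ) * f x) 2 (volume : Measure ℝ) →
      ∀ t ≥ (1:ℝ),
        Lnorm ⊤ (schrod t f) ≤ C * t ^ (-(1:ℝ)/2) *
          (Lnorm ⊤ (FT f) +
            t ^ (-(1:ℝ)/20) * Lnorm 2 (fun x : ℝ => (Real.sqrt (1 + x ^ 2) : ℂ) * f x)) := by
  classical
  have hc0 : 0 < (2 * Real.pi) ^ (-(1 : ℝ)/2) := Real.rpow_pos_of_pos (by positivity) _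
  set c : ℝ := (2 * Real.pi) ^ (-(1 : ℝ)/2) with hc
  set Kcs : ℝ := (eLpNorm (fun y : ℝ => |y| ^ ((1:ℝ)/10) * (Real.sqrt (1 + y ^ 2))⁻¹) 2
    (volume : Measure ℝ)).toReal with hKcs
  have hK0 : 0 ≤ Kcs := ENNReal.toReal_nonneg
  have hp0 : (0:ℝ) < Real.pi ^ ((1:ℝ)/2) := Real.rpow_pos_of_pos Real.pi_pos _
  set Ctot : ℝ := Real.pi ^ ((1:ℝ)/2) * (c + 2 * c ^ 2 * Kcs) + 1 with hCtot
  have hcc2 : (0:ℝ) ≤ 2 * c ^ 2 * Kcs := mul_nonneg (by positivity) hK0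
  have hC0 : 0 < Ctot := by
    have h1 : 0 ≤ Real.pi ^ ((1:ℝ)/2) * (c + 2 * c ^ 2 * Kcs) := by
      apply mul_nonneg hp0.le
      linarith [hc0]
    rw [hCtot]; linarith
  refine ⟨Ctot, hC0, ?_⟩
  intro f hf t ht
  have ht0 : (0:ℝ) < t := lt_of_lt_of_le one_pos ht
  -- basic abbreviations as pointwise identities
  have hFTapp : ∀ (g : ℝ → ℂ) (ξ : ℝ), FT g ξ
      = c • ∫ yy : ℝ, Complex.exp (Complex.I * yy * ξ) * g yy := by
    intro g ξ
    rw [hc]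
    rfl
  have hschrod : ∀ x : ℝ, schrod t f x = c • ∫ ξ : ℝ, Complex.exp (-(Complex.I * x * ξ)) *
      (Complex.exp (-(Complex.I * t * (ξ:ℂ) ^ 2)) * FT f ξ) := by
    intro x
    rw [hc]
    rfl
  have hFapp : ∀ x : ℝ, (fun x : ℝ => (Real.sqrt (1 + x ^ 2) : ℂ) * f x) x
      = ((Real.sqrt (1 + x ^ 2) : ℝ) : ℂ) * f x := fun x => rfl
  -- nonnegativity of the right-hand side
  have hM0 : 0 ≤ Lnorm ⊤ (FT f) := ENNReal.toReal_nonneg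
  have hL0 : 0 ≤ Lnorm 2 (fun x : ℝ => (Real.sqrt (1 + x ^ 2) : ℂ) * f x) :=
    ENNReal.toReal_nonneg
  have hRHS0 : 0 ≤ Ctot * t ^ (-(1:ℝ)/2) * (Lnorm ⊤ (FT f) +
      t ^ (-(1:ℝ)/20) * Lnorm 2 (fun x : ℝ => (Real.sqrt (1 + x ^ 2) : ℂ) * f x)) := by
    apply mul_nonneg (mul_nonneg hC0.le (Real.rpow_nonneg ht0.le _))
    exact add_nonneg hM0 (mul_nonneg (Real.rpow_nonneg ht0.le _) hL0)
  -- integrability of f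
  have hfint : Integrable f (volume : Measure ℝ) := by
    rw [← memLp_one_iff_integrable]
    have h1 : MemLp ((fun y : ℝ => (((Real.sqrt (1 + y ^ 2) : ℝ) : ℂ))⁻¹) •
        (fun x : ℝ => (Real.sqrt (1 + x ^ 2) : ℂ) * f x)) 1 (volume : Measure ℝ) :=
      MemLp.smul (r := 1) hf LPDaux.memLp_inv_sqrt
    apply (memLp_congr_ae ?_).mp h1
    filter_upwards with y
    rw [Pi.smul_apply', smul_eq_mul, ← mul_assoc,
      inv_mul_cancel₀ (Complex.ofReal_ne_zero.mpr (by positivity : Real.sqrt (1 + y ^ 2) ≠ 0)),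
      one_mul]
  -- the weighted integral J
  have hJ0 : 0 ≤ ∫ y : ℝ, |y| ^ ((1:ℝ)/10) * ‖f y‖ :=
    integral_nonneg fun y => by positivity
  have hwFeq : ∀ y : ℝ, (|y| ^ ((1:ℝ)/10) * (Real.sqrt (1 + y ^ 2))⁻¹) *
      ‖(fun x : ℝ => (Real.sqrt (1 + x ^ 2) : ℂ) * f x) y‖ = |y| ^ ((1:ℝ)/10) * ‖f y‖ := by
    intro y
    have hs0 : (0:ℝ) < Real.sqrt (1 + y ^ 2) := by positivity
    rw [hFapp y, norm_mul, Complex.norm_real, Real.norm_eq_abs,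
      _root_.abs_of_nonneg hs0.le]
    field_simp
  have hJint : Integrable (fun y : ℝ => |y| ^ ((1:ℝ)/10) * ‖f y‖) (volume : Measure ℝ) := by
    rw [← memLp_one_iff_integrable]
    have h1 : MemLp ((fun y : ℝ => |y| ^ ((1:ℝ)/10) * (Real.sqrt (1 + y ^ 2))⁻¹) •
        (fun y : ℝ => ‖(fun x : ℝ => (Real.sqrt (1 + x ^ 2) : ℂ) * f x) y‖)) 1
        (volume : Measure ℝ) :=
      MemLp.smul (r := 1) hf.norm LPDaux.memLp_weight
    apply (memLp_congr_ae ?_).mp h1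
    filter_upwards with y
    rw [Pi.smul_apply', smul_eq_mul]
    exact hwFeq y
  have hJle : (∫ y : ℝ, |y| ^ ((1:ℝ)/10) * ‖f y‖)
      ≤ Kcs * Lnorm 2 (fun x : ℝ => (Real.sqrt (1 + x ^ 2) : ℂ) * f x) := by
    have heq : (∫ y : ℝ, |y| ^ ((1:ℝ)/10) * ‖f y‖)
        = ∫ y : ℝ, (|y| ^ ((1:ℝ)/10) * (Real.sqrt (1 + y ^ 2))⁻¹) *
            ‖(fun x : ℝ => (Real.sqrt (1 + x ^ 2) : ℂ) * f x) y‖ := by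
      apply integral_congr_ae
      filter_upwards with y
      exact (hwFeq y).symm
    rw [heq, hKcs]
    have h2 := LPDaux.integral_mul_le_L2norms LPDaux.memLp_weight hf.norm
    rw [eLpNorm_norm] at h2
    exact h2
  -- bound on the Fourier transform
  have hFTbound : ∀ ξ : ℝ, ‖FT f ξ‖ ≤ c * ∫ y : ℝ, ‖f y‖ := by
    intro ξ
    rw [hFTapp f ξ, norm_smul, Real.norm_eq_abs, _root_.abs_of_pos hc0]
    apply mul_le_mul_of_nonneg_left _ hc0.le
    calc ‖∫ y : ℝ, Complex.exp (Complex.I * y * ξ) * f y‖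
        ≤ ∫ y : ℝ, ‖Complex.exp (Complex.I * y * ξ) * f y‖ := norm_integral_le_integral_norm _
      _ = ∫ y : ℝ, ‖f y‖ := by
          apply integral_congr_ae
          filter_upwards with y
          rw [norm_mul, LPDaux.norm_cexp_eq_one (by simp), one_mul]
  have hFTfin : eLpNorm (FT f) ⊤ (volume : Measure ℝ) ≠ ⊤ := by
    refine ne_of_lt (lt_of_le_of_lt
      (eLpNorm_le_of_ae_bound (ae_of_all _ hFTbound)) ?_)
    rw [ENNReal.toReal_top, inv_zero, ENNReal.rpow_zero, one_mul]
    exact ENNReal.ofReal_lt_top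
  have hMpt : ∀ ξ : ℝ, ‖FT f ξ‖ ≤ Lnorm ⊤ (FT f) := fun ξ =>
    LPDaux.norm_le_eLpNormTop_toReal (LPDaux.FT_continuous hfint) hFTfin ξ
  -- case split on integrability of FT f
  by_cases hI : Integrable (FT f) (volume : Measure ℝ)
  · -- main case
    have hkey : ∀ x : ℝ, (∫ ξ : ℝ, Complex.exp (-(Complex.I * x * ξ)) *
        (Complex.exp (-(Complex.I * t * (ξ:ℂ) ^ 2)) * FT f ξ))
        = ((2 * Real.pi) ^ (-(1 : ℝ)/2) : ℝ) •
          (((Real.pi : ℂ) / (Complex.I * t)) ^ ((1:ℂ)/2) *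
            ∫ y : ℝ, Complex.exp (((y:ℂ) - x) ^ 2 * (-(4 * (Complex.I * t))⁻¹)) * f y) := by
      intro x
      apply LPDaux.core_identity hfint ht _ hI
      intro ξ
      rw [hFTapp f ξ, hc]
    have hnormpow : ‖((Real.pi : ℂ) / (Complex.I * (t:ℂ))) ^ ((1:ℂ)/2)‖
        = (Real.pi / t) ^ ((1:ℝ)/2) := by
      have hIt0 : (Complex.I * (t:ℂ)) ≠ 0 :=
        mul_ne_zero Complex.I_ne_zero (Complex.ofReal_ne_zero.mpr ht0.ne')
      have hz0 : ((Real.pi : ℂ) / (Complex.I * (t:ℂ))) ≠ 0 :=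
        div_ne_zero (Complex.ofReal_ne_zero.mpr Real.pi_pos.ne') hIt0
      rw [norm_cpow_of_ne_zero hz0]
      have h12 : ((1:ℂ)/2) = (((1:ℝ)/2 : ℝ) : ℂ) := by push_cast; ring
      rw [h12, Complex.ofReal_re, Complex.ofReal_im, mul_zero, Real.exp_zero, div_one]
      congr 1
      rw [norm_div, Complex.norm_real, Real.norm_eq_abs, _root_.abs_of_pos Real.pi_pos, norm_mul,
        Complex.norm_I, Complex.norm_real, Real.norm_eq_abs, _root_.abs_of_pos ht0, one_mul]
    -- pointwise bound
    have hbound : ∀ x : ℝ, ‖schrod t f x‖ ≤ Ctot * t ^ (-(1:ℝ)/2) * (Lnorm ⊤ (FT f) +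
        t ^ (-(1:ℝ)/20) * Lnorm 2 (fun x : ℝ => (Real.sqrt (1 + x ^ 2) : ℂ) * f x)) := by
      intro x
      -- integrability of the two pieces
      have hint1 : Integrable (fun y : ℝ =>
          (Complex.exp (Complex.I * ((x ^ 2 / (4*t) : ℝ) : ℂ)) *
            Complex.exp (Complex.I * (y:ℂ) * ((-(x/(2*t)) : ℝ) : ℂ))) * f y)
          (volume : Measure ℝ) := by
        apply hfint.bdd_mul (c := 1)
        · exact (continuous_const.mul
            (Complex.continuous_exp.comp (by continuity))).aestronglyMeasurable
        · refine ae_of_all _ fun y => ?_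
          rw [norm_mul, LPDaux.norm_cexp_I_mul_ofReal _,
            LPDaux.norm_cexp_I_mul_mul, one_mul]
      have hint2 : Integrable (fun y : ℝ =>
          ((Complex.exp (Complex.I * ((x ^ 2 / (4*t) : ℝ) : ℂ)) *
            Complex.exp (Complex.I * (y:ℂ) * ((-(x/(2*t)) : ℝ) : ℂ))) *
            (Complex.exp (Complex.I * ((y ^ 2 / (4*t) : ℝ) : ℂ)) - 1)) * f y)
          (volume : Measure ℝ) := by
        apply hfint.bdd_mul (c := 2)
        · apply AEStronglyMeasurable.mul
          · exact (continuous_const.mul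
              (Complex.continuous_exp.comp (by continuity))).aestronglyMeasurable
          · exact ((Complex.continuous_exp.comp (by continuity)).sub
              continuous_const).aestronglyMeasurable
        · refine ae_of_all _ fun y => ?_
          rw [norm_mul, norm_mul, LPDaux.norm_cexp_I_mul_ofReal _,
            LPDaux.norm_cexp_I_mul_mul, one_mul, one_mul]
          calc ‖Complex.exp (Complex.I * ((y ^ 2 / (4*t) : ℝ) : ℂ)) - 1‖
              ≤ ‖Complex.exp (Complex.I * ((y ^ 2 / (4*t) : ℝ) : ℂ))‖ + ‖(1:ℂ)‖ :=
                norm_sub_le _ _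
            _ ≤ 2 := by rw [LPDaux.norm_cexp_I_mul_ofReal, norm_one]; norm_num
      -- split the kernel integral
      have hsplit : (∫ y : ℝ, Complex.exp (((y:ℂ) - x) ^ 2 *
            (-(4 * (Complex.I * (t:ℂ)))⁻¹)) * f y)
          = (∫ y : ℝ, (Complex.exp (Complex.I * ((x ^ 2 / (4*t) : ℝ) : ℂ)) *
              Complex.exp (Complex.I * (y:ℂ) * ((-(x/(2*t)) : ℝ) : ℂ))) * f y)
            + ∫ y : ℝ, ((Complex.exp (Complex.I * ((x ^ 2 / (4*t) : ℝ) : ℂ)) *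
                Complex.exp (Complex.I * (y:ℂ) * ((-(x/(2*t)) : ℝ) : ℂ))) *
                (Complex.exp (Complex.I * ((y ^ 2 / (4*t) : ℝ) : ℂ)) - 1)) * f y := by
        rw [← integral_add hint1 hint2]
        apply integral_congr_ae
        filter_upwards with y
        rw [LPDaux.split_exponent ht0 y]
        exact LPDaux.exp_split_eq _ _ _ (f y)
      -- first piece
      have hPnorm : ‖∫ y : ℝ, (Complex.exp (Complex.I * ((x ^ 2 / (4*t) : ℝ) : ℂ)) *
            Complex.exp (Complex.I * (y:ℂ) * ((-(x/(2*t)) : ℝ) : ℂ))) * f y‖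
          ≤ c⁻¹ * Lnorm ⊤ (FT f) := by
        have hP : (∫ y : ℝ, (Complex.exp (Complex.I * ((x ^ 2 / (4*t) : ℝ) : ℂ)) *
              Complex.exp (Complex.I * (y:ℂ) * ((-(x/(2*t)) : ℝ) : ℂ))) * f y)
            = Complex.exp (Complex.I * ((x ^ 2 / (4*t) : ℝ) : ℂ)) *
              ∫ y : ℝ, Complex.exp (Complex.I * (y:ℂ) * ((-(x/(2*t)) : ℝ) : ℂ)) * f y := by
          simp_rw [mul_assoc]
          exact integral_const_mul _ _
        have hP2 : (∫ y : ℝ, Complex.exp (Complex.I * (y:ℂ) * ((-(x/(2*t)) : ℝ) : ℂ)) * f y)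
            = (c⁻¹ : ℝ) • FT f (-(x/(2*t))) := by
          rw [hFTapp f (-(x/(2*t))), inv_smul_smul₀ hc0.ne']
        rw [hP, hP2, norm_mul, LPDaux.norm_cexp_I_mul_ofReal _, one_mul, norm_smul,
          Real.norm_eq_abs, _root_.abs_of_pos (inv_pos.mpr hc0)]
        exact mul_le_mul_of_nonneg_left (hMpt _) (inv_pos.mpr hc0).le
      -- second piece
      have hQnorm : ‖∫ y : ℝ, ((Complex.exp (Complex.I * ((x ^ 2 / (4*t) : ℝ) : ℂ)) *
            Complex.exp (Complex.I * (y:ℂ) * ((-(x/(2*t)) : ℝ) : ℂ))) *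
            (Complex.exp (Complex.I * ((y ^ 2 / (4*t) : ℝ) : ℂ)) - 1)) * f y‖
          ≤ 2 * (4*t) ^ (-(1:ℝ)/20) * ∫ y : ℝ, |y| ^ ((1:ℝ)/10) * ‖f y‖ := by
        calc ‖∫ y : ℝ, ((Complex.exp (Complex.I * ((x ^ 2 / (4*t) : ℝ) : ℂ)) *
              Complex.exp (Complex.I * (y:ℂ) * ((-(x/(2*t)) : ℝ) : ℂ))) *
              (Complex.exp (Complex.I * ((y ^ 2 / (4*t) : ℝ) : ℂ)) - 1)) * f y‖
            ≤ ∫ y : ℝ, ‖((Complex.exp (Complex.I * ((x ^ 2 / (4*t) : ℝ) : ℂ)) *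
              Complex.exp (Complex.I * (y:ℂ) * ((-(x/(2*t)) : ℝ) : ℂ))) *
              (Complex.exp (Complex.I * ((y ^ 2 / (4*t) : ℝ) : ℂ)) - 1)) * f y‖ :=
              norm_integral_le_integral_norm _
          _ ≤ ∫ y : ℝ, (2 * (4*t) ^ (-(1:ℝ)/20)) * (|y| ^ ((1:ℝ)/10) * ‖f y‖) := by
              apply integral_mono_of_nonneg (ae_of_all _ fun y => norm_nonneg _)
                (hJint.const_mul _)
              filter_upwards with y
              rw [norm_mul, norm_mul, norm_mul, LPDaux.norm_cexp_I_mul_ofReal _,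
                LPDaux.norm_cexp_I_mul_mul, one_mul, one_mul]
              have h1 : ‖Complex.exp (Complex.I * ((y ^ 2 / (4*t) : ℝ) : ℂ)) - 1‖
                  ≤ 2 * min 1 |y ^ 2 / (4*t)| := LPDaux.norm_cexp_I_sub_one_le _
              have h2 := LPDaux.min_bound ht0 y
              calc ‖Complex.exp (Complex.I * ((y ^ 2 / (4*t) : ℝ) : ℂ)) - 1‖ * ‖f y‖
                  ≤ (2 * (4*t) ^ (-(1:ℝ)/20) * |y| ^ ((1:ℝ)/10)) * ‖f y‖ :=
                    mul_le_mul_of_nonneg_right (le_trans h1 h2) (norm_nonneg _)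
                _ = (2 * (4*t) ^ (-(1:ℝ)/20)) * (|y| ^ ((1:ℝ)/10) * ‖f y‖) := by ring
          _ = 2 * (4*t) ^ (-(1:ℝ)/20) * ∫ y : ℝ, |y| ^ ((1:ℝ)/10) * ‖f y‖ := by
              rw [integral_const_mul]
      -- total bound on the kernel integral
      have hEnorm : ‖∫ y : ℝ, Complex.exp (((y:ℂ) - x) ^ 2 *
            (-(4 * (Complex.I * (t:ℂ)))⁻¹)) * f y‖
          ≤ c⁻¹ * Lnorm ⊤ (FT f) +
            2 * (4*t) ^ (-(1:ℝ)/20) * ∫ y : ℝ, |y| ^ ((1:ℝ)/10) * ‖f y‖ := by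
        rw [hsplit]
        exact le_trans (norm_add_le _ _) (add_le_add hPnorm hQnorm)
      -- assemble
      have hxid : schrod t f x = c • (c •
          (((Real.pi : ℂ) / (Complex.I * t)) ^ ((1:ℂ)/2) *
            ∫ y : ℝ, Complex.exp (((y:ℂ) - x) ^ 2 * (-(4 * (Complex.I * t))⁻¹)) * f y)) := by
        rw [hschrod x, hkey x, ← hc]
      rw [hxid, norm_smul, norm_smul, Real.norm_eq_abs, _root_.abs_of_pos hc0, norm_mul,
        hnormpow]
      have hq : (4*t) ^ (-(1:ℝ)/20) ≤ t ^ (-(1:ℝ)/20) := by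
        rw [show (-(1:ℝ)/20) = -((1:ℝ)/20) by norm_num, Real.rpow_neg (by positivity),
          Real.rpow_neg ht0.le]
        apply inv_anti₀ (Real.rpow_pos_of_pos ht0 _)
        exact Real.rpow_le_rpow ht0.le (by linarith) (by norm_num)
      have hs : (Real.pi / t) ^ ((1:ℝ)/2) = Real.pi ^ ((1:ℝ)/2) * t ^ (-(1:ℝ)/2) := by
        rw [Real.div_rpow Real.pi_pos.le ht0.le, div_eq_mul_inv,
          show (-(1:ℝ)/2) = -((1:ℝ)/2) by norm_num, Real.rpow_neg ht0.le]
      have hq0 : (0:ℝ) ≤ (4*t) ^ (-(1:ℝ)/20) := Real.rpow_nonneg (by positivity) _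
      have ht20 : (0:ℝ) ≤ t ^ (-(1:ℝ)/20) := Real.rpow_nonneg ht0.le _
      have e1 : Real.pi ^ ((1:ℝ)/2) * c ≤ Ctot := by
        rw [hCtot]
        nlinarith [mul_nonneg hp0.le hcc2]
      have e2 : Real.pi ^ ((1:ℝ)/2) * 2 * c * c * Kcs ≤ Ctot := by
        rw [hCtot]
        nlinarith [mul_nonneg hp0.le hc0.le]
      calc c * (c * ((Real.pi / t) ^ ((1:ℝ)/2) *
            ‖∫ y : ℝ, Complex.exp (((y:ℂ) - x) ^ 2 * (-(4 * (Complex.I * (t:ℂ)))⁻¹)) * f y‖))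
          ≤ c * (c * ((Real.pi / t) ^ ((1:ℝ)/2) * (c⁻¹ * Lnorm ⊤ (FT f) +
              2 * (4*t) ^ (-(1:ℝ)/20) * ∫ y : ℝ, |y| ^ ((1:ℝ)/10) * ‖f y‖))) := by
            apply mul_le_mul_of_nonneg_left _ hc0.le
            apply mul_le_mul_of_nonneg_left _ hc0.le
            exact mul_le_mul_of_nonneg_left hEnorm (Real.rpow_nonneg (by positivity) _)
        _ ≤ c * (c * ((Real.pi / t) ^ ((1:ℝ)/2) * (c⁻¹ * Lnorm ⊤ (FT f) +
              2 * (t ^ (-(1:ℝ)/20) *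
                (Kcs * Lnorm 2 (fun x : ℝ => (Real.sqrt (1 + x ^ 2) : ℂ) * f x)))))) := by
            apply mul_le_mul_of_nonneg_left _ hc0.le
            apply mul_le_mul_of_nonneg_left _ hc0.le
            apply mul_le_mul_of_nonneg_left _ (Real.rpow_nonneg (by positivity) _)
            apply add_le_add le_rfl
            rw [mul_assoc 2 _ _]
            apply mul_le_mul_of_nonneg_left _ (by norm_num : (0:ℝ) ≤ 2)
            exact mul_le_mul hq hJle hJ0 ht20
        _ = t ^ (-(1:ℝ)/2) * ((Real.pi ^ ((1:ℝ)/2) * c) * Lnorm ⊤ (FT f) +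
              (Real.pi ^ ((1:ℝ)/2) * 2 * c * c * Kcs) * (t ^ (-(1:ℝ)/20) *
                Lnorm 2 (fun x : ℝ => (Real.sqrt (1 + x ^ 2) : ℂ) * f x))) := by
            rw [hs]
            field_simp
        _ ≤ t ^ (-(1:ℝ)/2) * (Ctot * Lnorm ⊤ (FT f) + Ctot * (t ^ (-(1:ℝ)/20) *
              Lnorm 2 (fun x : ℝ => (Real.sqrt (1 + x ^ 2) : ℂ) * f x))) := by
            apply mul_le_mul_of_nonneg_left _ (Real.rpow_nonneg ht0.le _)
            apply add_le_add
            · exact mul_le_mul_of_nonneg_right e1 hM0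
            · exact mul_le_mul_of_nonneg_right e2 (mul_nonneg ht20 hL0)
        _ = Ctot * t ^ (-(1:ℝ)/2) * (Lnorm ⊤ (FT f) + t ^ (-(1:ℝ)/20) *
              Lnorm 2 (fun x : ℝ => (Real.sqrt (1 + x ^ 2) : ℂ) * f x)) := by ring
    -- pass from pointwise bound to the L^∞ norm
    show (eLpNorm (schrod t f) ⊤ (volume : Measure ℝ)).toReal ≤ _
    have h1 := eLpNorm_le_of_ae_bound (μ := (volume : Measure ℝ)) (p := (⊤:ℝ≥0∞))
      (ae_of_all _ hbound)
    refine ENNReal.toReal_le_of_le_ofReal hRHS0 (le_trans h1 ?_)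
    rw [ENNReal.toReal_top, inv_zero, ENNReal.rpow_zero, one_mul]
  · -- degenerate case: the defining integral is not integrable, so `schrod t f = 0`
    have hzero : schrod t f = fun _ : ℝ => (0:ℂ) := by
      funext x
      rw [hschrod x, integral_undef, smul_zero]
      intro hS
      exact hI (LPDaux.integrand_recover hS)
    show (eLpNorm (schrod t f) ⊤ (volume : Measure ℝ)).toReal ≤ _
    rw [hzero]
    have : eLpNorm (fun _ : ℝ => (0:ℂ)) ⊤ (volume : Measure ℝ) = 0 := eLpNorm_zero'
    rw [this]
    simpa using hRHS0

end
end

section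
/- (Trilinear kernel bound) Let f ∈ 𝓢(ℝ), fix ξ ∈ ℝ, and define G(ξ,η,σ) = 𝓕f(ξ−η) · 𝓕(conj f)(η−ξ+σ) · 𝓕f(ξ−σ). Then there is an absolute constant C such that for all (η,σ) ∈ ℝ², |𝓕^{-1}_{η,σ}[G](η,σ)| ≤ C ∫_ℝ |f(z−η)| |f(z)| |f(z−σ)| dz, where 𝓕^{-1}_{η,σ} is the inverse two-dimensional Fourier transform acting in the variables (η,σ). -/
open MeasureTheory Complex
open scoped ENNReal

noncomputable section

section AuxTrilinear
open scoped FourierTransform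

lemma FT_eq (f : ℝ → ℂ) (ζ : ℝ) :
    FT f ζ = ((2 * Real.pi) ^ (-(1 : ℝ)/2)) • (𝓕 f) (-ζ / (2 * Real.pi)) := by
  rw [FT, Real.fourier_real_eq_integral_exp_smul]
  congr 1
  refine integral_congr_ae (Filter.Eventually.of_forall fun v => ?_)
  simp only [smul_eq_mul]
  congr 2
  push_cast
  have hπ : (Real.pi : ℂ) ≠ 0 := by exact_mod_cast Real.pi_ne_zero
  field_simp

lemma FT_integrable (f : SchwartzMap ℝ ℂ) : Integrable (FT ⇑f) := by
  set g₀ := SchwartzMap.fourierTransformCLM ℝ f with hg₀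
  have hg : 𝓕 ⇑f = ⇑g₀ := rfl
  have h1 : Integrable (fun ζ : ℝ => g₀ ((-(2 * Real.pi))⁻¹ * ζ)) :=
    g₀.integrable.comp_mul_left' (by simp [Real.pi_ne_zero])
  refine (h1.smul ((2 * Real.pi) ^ (-(1 : ℝ)/2))).congr
    (Filter.Eventually.of_forall fun ζ => ?_)
  rw [FT_eq, hg]
  simp only [Pi.smul_apply]
  congr 2
  rw [inv_mul_eq_div, div_neg, neg_div]

lemma FT_continuous (f : SchwartzMap ℝ ℂ) : Continuous (FT ⇑f) := by
  have : FT ⇑f = fun ζ =>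
      ((2 * Real.pi) ^ (-(1 : ℝ)/2)) •
        (SchwartzMap.fourierTransformCLM ℝ f) (-ζ / (2 * Real.pi)) := by
    funext ζ; rw [FT_eq]; rfl
  rw [this]
  fun_prop

lemma FT_inv (f : SchwartzMap ℝ ℂ) (t : ℝ) :
    ∫ a : ℝ, Complex.exp (-(Complex.I * a * t)) * FT ⇑f a
      = (((2 * Real.pi) ^ ((1 : ℝ)/2) : ℝ) : ℂ) * f t := by
  set G : ℝ → ℂ := fun a => Complex.exp (-(Complex.I * a * t)) * FT ⇑f a with hG
  have key := MeasureTheory.Measure.integral_comp_mul_left G (-(2 * Real.pi))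
  have h2π : (0:ℝ) < 2 * Real.pi := by positivity
  have habs : |(-(2 * Real.pi))⁻¹| = (2 * Real.pi)⁻¹ := by
    rw [abs_inv, abs_neg, abs_of_pos h2π]
  have hg : 𝓕 ⇑f = ⇑(SchwartzMap.fourierTransformCLM ℝ f) := rfl
  have hinv : 𝓕⁻ (𝓕 ⇑f) = ⇑f :=
    f.continuous.fourierInv_fourier_eq f.integrable
      (hg ▸ (SchwartzMap.fourierTransformCLM ℝ f).integrable)
  have hval : ∫ x : ℝ, G (-(2 * Real.pi) * x)
      = (((2 * Real.pi) ^ (-(1 : ℝ)/2) : ℝ) : ℂ) * f t := by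
    have : ∀ x : ℝ, G (-(2 * Real.pi) * x)
        = ((2 * Real.pi) ^ (-(1 : ℝ)/2) : ℝ) •
            (Complex.exp ((-2 * Real.pi * x * (-t) : ℝ) * Complex.I) • 𝓕 ⇑f x) := by
      intro x
      show Complex.exp (-(Complex.I * ((-(2 * Real.pi) * x : ℝ) : ℂ) * t)) * FT ⇑f (-(2 * Real.pi) * x) = _
      rw [FT_eq]
      have harg : (-(-(2 * Real.pi) * x)) / (2 * Real.pi) = x := by field_simp
      rw [harg, mul_smul_comm]
      congr 2
      push_cast
      ring
    rw [integral_congr_ae (Filter.Eventually.of_forall this), integral_smul]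
    rw [← Real.fourier_real_eq_integral_exp_smul (𝓕 ⇑f) (-t)]
    rw [← Real.fourierInv_eq_fourier_neg, hinv]
    rw [Complex.real_smul]
  have h2 : ∫ y : ℝ, G y = (2 * Real.pi) • ∫ x : ℝ, G (-(2 * Real.pi) * x) := by
    rw [key, habs, smul_smul, mul_inv_cancel₀ (by positivity : (2 * Real.pi) ≠ 0), one_smul]
  have hrp : (2 * Real.pi) ^ ((1:ℝ)/2) = (2 * Real.pi) * (2 * Real.pi) ^ (-(1:ℝ)/2) := by
    rw [show ((1:ℝ)/2) = 1 + (-(1:ℝ)/2) by norm_num, Real.rpow_add (by positivity),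
      Real.rpow_one]
  show ∫ y : ℝ, G y = _
  rw [h2, hval, hrp]
  push_cast
  rw [Complex.real_smul]
  push_cast
  ring

lemma FT_shift (f : SchwartzMap ℝ ℂ) (ξ t : ℝ) :
    ∫ p : ℝ, Complex.exp (Complex.I * p * t) * FT ⇑f (ξ - p)
      = Complex.exp (Complex.I * ξ * t) * ((((2 * Real.pi) ^ ((1 : ℝ)/2) : ℝ) : ℂ) * f t) := by
  set K : ℝ → ℂ := fun a => Complex.exp (Complex.I * ((ξ - a : ℝ) : ℂ) * t) * FT ⇑f a with hK
  have h1 : ∀ p : ℝ, Complex.exp (Complex.I * p * t) * FT ⇑f (ξ - p) = K (ξ - p) := by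
    intro p
    rw [hK]
    simp only []
    congr 2
    push_cast
    ring
  rw [integral_congr_ae (Filter.Eventually.of_forall h1),
    MeasureTheory.integral_sub_left_eq_self K volume ξ]
  have h2 : ∀ a : ℝ, K a
      = Complex.exp (Complex.I * ξ * t) * (Complex.exp (-(Complex.I * a * t)) * FT ⇑f a) := by
    intro a
    rw [hK]
    simp only []
    rw [← mul_assoc, ← Complex.exp_add]
    congr 2
    push_cast
    ring
  rw [integral_congr_ae (Filter.Eventually.of_forall h2), integral_const_mul, FT_inv]

end AuxTrilinear

/-- Trilinear kernel bound: with `G(ξ,η,σ) = 𝓕f(ξ−η)·𝓕(conj f)(η−ξ+σ)·𝓕f(ξ−σ)`,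
`|𝓕⁻¹_{η,σ}[G](η,σ)| ≤ C ∫ |f(z−η)||f(z)||f(z−σ)| dz`. -/
theorem trilinear_kernel_bound
    : ∃ C > (0:ℝ), ∀ (f : SchwartzMap ℝ ℂ) (ξ η σ : ℝ),
      ‖(2 * Real.pi : ℝ)⁻¹ •
          ∫ p : ℝ × ℝ, Complex.exp (-(Complex.I * ((p.1:ℂ) * (η:ℂ) + (p.2:ℂ) * (σ:ℂ)))) *
            (FT (⇑f) (ξ - p.1) * FT (fun x : ℝ => (starRingEnd ℂ) (f x)) (p.1 - ξ + p.2) *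
              FT (⇑f) (ξ - p.2))‖
        ≤ C * ∫ z : ℝ, ‖f (z - η)‖ * ‖f z‖ * ‖f (z - σ)‖ := by
  refine ⟨1, one_pos, fun f ξ η σ => ?_⟩
  set c : ℝ := (2 * Real.pi) ^ (-(1:ℝ)/2) with hc
  set s : ℝ := (2 * Real.pi) ^ ((1:ℝ)/2) with hs
  have hcpos : 0 < c := Real.rpow_pos_of_pos (by positivity) _
  have hspos : 0 < s := Real.rpow_pos_of_pos (by positivity) _
  have hss : s * s = 2 * Real.pi := by
    rw [hs, ← Real.rpow_add (by positivity)]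
    norm_num
  -- the inner function after expanding the conjugate Fourier transform
  set h : ℝ × ℝ → ℝ → ℂ := fun p y =>
    (Complex.exp (Complex.I * (p.1:ℂ) * ((y - η : ℝ) : ℂ)) * FT ⇑f (ξ - p.1)) *
    (Complex.exp (Complex.I * (p.2:ℂ) * ((y - σ : ℝ) : ℂ)) * FT ⇑f (ξ - p.2)) *
    ((c : ℂ) * (Complex.exp (-(Complex.I * (y:ℂ) * (ξ:ℂ))) * (starRingEnd ℂ) (f y))) with hh
  -- pointwise identity
  have hpoint : ∀ p : ℝ × ℝ,
      Complex.exp (-(Complex.I * ((p.1:ℂ) * (η:ℂ) + (p.2:ℂ) * (σ:ℂ)))) *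
        (FT (⇑f) (ξ - p.1) * FT (fun x : ℝ => (starRingEnd ℂ) (f x)) (p.1 - ξ + p.2) *
          FT (⇑f) (ξ - p.2))
      = ∫ y : ℝ, h p y := by
    intro p
    have hmid : FT (fun x : ℝ => (starRingEnd ℂ) (f x)) (p.1 - ξ + p.2)
        = c • ∫ y : ℝ, Complex.exp (Complex.I * (y:ℂ) * ((p.1 - ξ + p.2 : ℝ):ℂ)) *
            (starRingEnd ℂ) (f y) := rfl
    have hy : ∀ y : ℝ, h p y
        = ((c:ℂ) * (Complex.exp (-(Complex.I * ((p.1:ℂ) * (η:ℂ) + (p.2:ℂ) * (σ:ℂ)))) *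
            (FT ⇑f (ξ - p.1) * FT ⇑f (ξ - p.2)))) *
          (Complex.exp (Complex.I * (y:ℂ) * ((p.1 - ξ + p.2 : ℝ):ℂ)) * (starRingEnd ℂ) (f y)) := by
      intro y
      have hexp : Complex.exp (Complex.I * (p.1:ℂ) * ((y - η : ℝ) : ℂ)) *
          Complex.exp (Complex.I * (p.2:ℂ) * ((y - σ : ℝ) : ℂ)) *
          Complex.exp (-(Complex.I * (y:ℂ) * (ξ:ℂ)))
          = Complex.exp (-(Complex.I * ((p.1:ℂ) * (η:ℂ) + (p.2:ℂ) * (σ:ℂ)))) *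
            Complex.exp (Complex.I * (y:ℂ) * ((p.1 - ξ + p.2 : ℝ):ℂ)) := by
        rw [← Complex.exp_add, ← Complex.exp_add, ← Complex.exp_add]
        congr 1
        push_cast
        ring
      rw [hh]
      simp only []
      linear_combination (FT ⇑f (ξ - p.1) * FT ⇑f (ξ - p.2) * (c:ℂ) * (starRingEnd ℂ) (f y)) * hexp
    rw [integral_congr_ae (Filter.Eventually.of_forall hy), MeasureTheory.integral_const_mul,
      hmid, Complex.real_smul]
    ring
  -- integrability of the full integrand
  have hFTint : Integrable (fun a : ℝ => FT ⇑f (ξ - a)) :=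
    (integrable_comp_sub_left (FT ⇑f) ξ).mpr (FT_integrable f)
  have hbound : Integrable
      (fun q : (ℝ × ℝ) × ℝ => (‖FT ⇑f (ξ - q.1.1)‖ * ‖FT ⇑f (ξ - q.1.2)‖) * (c * ‖f q.2‖))
      ((volume.prod volume).prod volume) :=
    (hFTint.norm.mul_prod hFTint.norm).mul_prod (f.integrable.norm.const_mul c)
  have hFTcont : Continuous (FT ⇑f) := FT_continuous f
  have hcont : Continuous (Function.uncurry h) := by
    have hconj : Continuous fun x : ℝ => (starRingEnd ℂ) (f x) :=
      Complex.continuous_conj.comp f.continuous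
    have c1 : Continuous fun q : (ℝ × ℝ) × ℝ =>
        Complex.exp (Complex.I * (q.1.1:ℂ) * ((q.2 - η : ℝ):ℂ)) := by fun_prop
    have c2 : Continuous fun q : (ℝ × ℝ) × ℝ =>
        Complex.exp (Complex.I * (q.1.2:ℂ) * ((q.2 - σ : ℝ):ℂ)) := by fun_prop
    have c3 : Continuous fun q : (ℝ × ℝ) × ℝ =>
        Complex.exp (-(Complex.I * (q.2:ℂ) * (ξ:ℂ))) := by fun_prop
    have c4 : Continuous fun q : (ℝ × ℝ) × ℝ => FT ⇑f (ξ - q.1.1) :=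
      hFTcont.comp (by fun_prop)
    have c5 : Continuous fun q : (ℝ × ℝ) × ℝ => FT ⇑f (ξ - q.1.2) :=
      hFTcont.comp (by fun_prop)
    have c6 : Continuous fun q : (ℝ × ℝ) × ℝ => (starRingEnd ℂ) (f q.2) :=
      hconj.comp continuous_snd
    exact ((c1.mul c4).mul (c2.mul c5)).mul (continuous_const.mul (c3.mul c6))
  have hI : Integrable (Function.uncurry h) ((volume.prod volume).prod volume) := by
    refine hbound.mono' hcont.aestronglyMeasurable
      (Filter.Eventually.of_forall fun q => le_of_eq ?_)
    rw [hh]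
    simp only [Function.uncurry]
    simp only [norm_mul, Complex.norm_exp, Complex.norm_conj]
    simp only [Complex.norm_real, Real.norm_eq_abs,
      abs_of_pos hcpos]
    have hre1 : (Complex.I * (q.1.1:ℂ) * ((q.2 - η : ℝ):ℂ)).re = 0 := by simp
    have hre2 : (Complex.I * (q.1.2:ℂ) * ((q.2 - σ : ℝ):ℂ)).re = 0 := by simp
    have hre3 : (-(Complex.I * (q.2:ℂ) * (ξ:ℂ))).re = 0 := by simp
    rw [hre1, hre2, hre3, Real.exp_zero]
    ring
  -- swap the order of integration
  have hswap : (∫ p : ℝ × ℝ,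
        Complex.exp (-(Complex.I * ((p.1:ℂ) * (η:ℂ) + (p.2:ℂ) * (σ:ℂ)))) *
          (FT (⇑f) (ξ - p.1) * FT (fun x : ℝ => (starRingEnd ℂ) (f x)) (p.1 - ξ + p.2) *
            FT (⇑f) (ξ - p.2)))
      = ∫ y : ℝ, ∫ p : ℝ × ℝ, h p y ∂(volume.prod volume) := by
    rw [integral_congr_ae (Filter.Eventually.of_forall hpoint),
      MeasureTheory.Measure.volume_eq_prod]
    exact MeasureTheory.integral_integral_swap hI
  -- evaluate the inner integral for fixed y
  have hfix : ∀ y : ℝ, (∫ p : ℝ × ℝ, h p y ∂(volume.prod volume))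
      = (Complex.exp (Complex.I * (ξ:ℂ) * ((y - η : ℝ):ℂ)) * ((s:ℂ) * f (y - η))) *
        (Complex.exp (Complex.I * (ξ:ℂ) * ((y - σ : ℝ):ℂ)) * ((s:ℂ) * f (y - σ))) *
        ((c:ℂ) * (Complex.exp (-(Complex.I * (y:ℂ) * (ξ:ℂ))) * (starRingEnd ℂ) (f y))) := by
    intro y
    rw [hh]
    simp only []
    rw [MeasureTheory.integral_mul_const,
      MeasureTheory.integral_prod_mul
        (f := fun a : ℝ => Complex.exp (Complex.I * (a:ℂ) * ((y - η : ℝ):ℂ)) * FT ⇑f (ξ - a))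
        (g := fun b : ℝ => Complex.exp (Complex.I * (b:ℂ) * ((y - σ : ℝ):ℂ)) * FT ⇑f (ξ - b)),
      FT_shift f ξ (y - η), FT_shift f ξ (y - σ)]
  set T : ℝ → ℂ := fun y =>
      (Complex.exp (Complex.I * (ξ:ℂ) * ((y - η : ℝ):ℂ)) * ((s:ℂ) * f (y - η))) *
      (Complex.exp (Complex.I * (ξ:ℂ) * ((y - σ : ℝ):ℂ)) * ((s:ℂ) * f (y - σ))) *
      ((c:ℂ) * (Complex.exp (-(Complex.I * (y:ℂ) * (ξ:ℂ))) * (starRingEnd ℂ) (f y))) with hT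
  have hmain : (∫ p : ℝ × ℝ,
        Complex.exp (-(Complex.I * ((p.1:ℂ) * (η:ℂ) + (p.2:ℂ) * (σ:ℂ)))) *
          (FT (⇑f) (ξ - p.1) * FT (fun x : ℝ => (starRingEnd ℂ) (f x)) (p.1 - ξ + p.2) *
            FT (⇑f) (ξ - p.2)))
      = ∫ y : ℝ, T y := by
    rw [hswap]
    exact integral_congr_ae (Filter.Eventually.of_forall hfix)
  have hnorm : ∀ y : ℝ, ‖T y‖ = s * s * c * (‖f (y - η)‖ * ‖f y‖ * ‖f (y - σ)‖) := by
    intro y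
    rw [hT]
    simp only [norm_mul, Complex.norm_exp, Complex.norm_conj]
    simp only [Complex.norm_real, Real.norm_eq_abs,
      abs_of_pos hcpos, abs_of_pos hspos]
    have hre1 : (Complex.I * (ξ:ℂ) * ((y - η : ℝ):ℂ)).re = 0 := by simp
    have hre2 : (Complex.I * (ξ:ℂ) * ((y - σ : ℝ):ℂ)).re = 0 := by simp
    have hre3 : (-(Complex.I * (y:ℂ) * (ξ:ℂ))).re = 0 := by simp
    rw [hre1, hre2, hre3, Real.exp_zero]
    ring
  have hX : 0 ≤ ∫ z : ℝ, ‖f (z - η)‖ * ‖f z‖ * ‖f (z - σ)‖ :=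
    integral_nonneg fun z => by positivity
  have hc1 : c ≤ 1 := by
    rw [hc]
    exact Real.rpow_le_one_of_one_le_of_nonpos
      (by nlinarith [Real.pi_gt_three]) (by norm_num)
  calc ‖(2 * Real.pi : ℝ)⁻¹ • ∫ p : ℝ × ℝ,
        Complex.exp (-(Complex.I * ((p.1:ℂ) * (η:ℂ) + (p.2:ℂ) * (σ:ℂ)))) *
          (FT (⇑f) (ξ - p.1) * FT (fun x : ℝ => (starRingEnd ℂ) (f x)) (p.1 - ξ + p.2) *
            FT (⇑f) (ξ - p.2))‖
      = (2 * Real.pi)⁻¹ * ‖∫ y : ℝ, T y‖ := by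
        rw [hmain, norm_smul, Real.norm_eq_abs, abs_of_pos (by positivity)]
    _ ≤ (2 * Real.pi)⁻¹ * ∫ y : ℝ, ‖T y‖ :=
        mul_le_mul_of_nonneg_left (norm_integral_le_integral_norm _) (by positivity)
    _ = (2 * Real.pi)⁻¹ * (s * s * c * ∫ z : ℝ, ‖f (z - η)‖ * ‖f z‖ * ‖f (z - σ)‖) := by
        rw [integral_congr_ae (Filter.Eventually.of_forall hnorm),
          MeasureTheory.integral_const_mul]
    _ = c * ∫ z : ℝ, ‖f (z - η)‖ * ‖f z‖ * ‖f (z - σ)‖ := by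
        rw [hss]
        have : (2 * Real.pi) ≠ 0 := by positivity
        field_simp
    _ ≤ 1 * ∫ z : ℝ, ‖f (z - η)‖ * ‖f z‖ * ‖f (z - σ)‖ :=
        mul_le_mul_of_nonneg_right hc1 hX

end
end

section
/- (Uniform decay for shifted propagators) Let T_0 ≥ 0. There is a constant C = C(T_0) such that for every f : ℝ → ℂ with ⟨x⟩f ∈ L²(ℝ) and 𝓕f ∈ L^∞(ℝ), every s ≥ 1, and every b ∈ [0, T_0], ‖ e^{i(s+b)Δ} f ‖_{L^∞} ≤ C s^{-1/2} ( ‖𝓕f‖_{L^∞} + ‖⟨x⟩f‖_{L²} ). -/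
open MeasureTheory Complex
open scoped ENNReal

noncomputable section

/-- Gaussian-regularized dispersive bound. -/
lemma reg_bound (f : ℝ → ℂ) (hf : Integrable f) (t x ε : ℝ) (ht : 0 < t) (hε : 0 < ε) :
    ‖∫ ξ : ℝ, Complex.exp (-(ε:ℂ)*ξ^2) *
        (Complex.exp (-(Complex.I * x * ξ)) * (Complex.exp (-(Complex.I * t * ξ ^ 2)) * FT f ξ))‖
      ≤ ((2 * Real.pi) ^ (-(1 : ℝ)/2)) * Real.sqrt (Real.pi / t) * ∫ y, ‖f y‖ := by
  set c : ℝ := ((2 * Real.pi) ^ (-(1 : ℝ)/2)) with hc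
  have hcpos : 0 < c := Real.rpow_pos_of_pos (by positivity) _
  set b : ℂ := (ε : ℂ) + Complex.I * t with hb
  have hbre : 0 < b.re := by simp [hb, hε]
  have hbabs : t ≤ ‖b‖ := by
    have : b.im = t := by simp [hb]
    calc t ≤ |b.im| := by rw [this]; exact le_abs_self t
    _ ≤ ‖b‖ := Complex.abs_im_le_norm b
  set F : ℝ → ℝ → ℂ := fun ξ y =>
    Complex.exp (Complex.I * ((y : ℂ) - x) * ξ) * Complex.exp (-b * ξ^2) * f y with hF
  have key : ∀ ξ : ℝ, Complex.exp (-(ε:ℂ)*ξ^2) *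
        (Complex.exp (-(Complex.I * x * ξ)) * (Complex.exp (-(Complex.I * t * ξ ^ 2)) * FT f ξ))
      = c • ∫ y : ℝ, F ξ y := by
    intro ξ
    rw [FT]
    rw [Complex.real_smul, Complex.real_smul]
    rw [show ∀ z w u v s : ℂ, z * (w * (u * (v * s))) = v * (z*w*u*s) by intros; ring]
    congr 1
    rw [← MeasureTheory.integral_const_mul]
    congr 1; funext y
    rw [hF]
    rw [show ∀ a g v : ℂ, a * (g * v) = (a * g) * v from fun _ _ _ => by ring]
    congr 1
    simp only [← Complex.exp_add]
    congr 1
    ring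
  rw [show (fun ξ : ℝ => Complex.exp (-(ε:ℂ)*ξ^2) *
        (Complex.exp (-(Complex.I * x * ξ)) * (Complex.exp (-(Complex.I * t * ξ ^ 2)) * FT f ξ)))
      = fun ξ : ℝ => c • ∫ y : ℝ, F ξ y from funext key]
  rw [MeasureTheory.integral_smul, norm_smul, Real.norm_eq_abs, abs_of_pos hcpos, mul_assoc]
  refine mul_le_mul_of_nonneg_left ?_ hcpos.le
  have hFint : Integrable (Function.uncurry F) (volume.prod volume) := by
    have hφ : Continuous fun p : ℝ × ℝ =>
        Complex.exp (Complex.I * ((p.2 : ℂ) - x) * p.1) * Complex.exp (-b * p.1^2) := by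
      fun_prop
    have hmeas : AEStronglyMeasurable (Function.uncurry F) (volume.prod volume) := by
      apply hφ.aestronglyMeasurable.mul
      exact hf.1.comp_quasiMeasurePreserving MeasureTheory.Measure.quasiMeasurePreserving_snd
    have hg : Integrable (fun p : ℝ × ℝ => Real.exp (-ε * p.1^2) * ‖f p.2‖)
        (volume.prod volume) := (integrable_exp_neg_mul_sq hε).mul_prod hf.norm
    refine hg.mono' hmeas (Filter.Eventually.of_forall fun p => ?_)
    show ‖F p.1 p.2‖ ≤ _
    rw [hF]
    simp only [norm_mul, Complex.norm_exp]
    have h1 : (Complex.I * ((p.2 : ℂ) - x) * p.1).re = 0 := by simp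
    have h2 : (-b * (p.1:ℂ)^2).re = -ε * p.1^2 := by
      rw [hb]
      simp [Complex.mul_re, ← Complex.ofReal_pow]
    rw [h1, h2, Real.exp_zero, one_mul]
  rw [MeasureTheory.integral_integral_swap hFint]
  have inner_eq : ∀ y : ℝ, (∫ ξ : ℝ, F ξ y)
      = (((Real.pi : ℂ)/b) ^ (1/2 : ℂ) * Complex.exp (-((y:ℂ) - x)^2/(4*b))) * f y := by
    intro y
    rw [hF]
    simp only
    rw [MeasureTheory.integral_mul_const, fourierIntegral_gaussian hbre ((y:ℂ) - x)]
  have hker : ∀ y : ℝ, ‖((Real.pi : ℂ)/b) ^ (1/2 : ℂ) * Complex.exp (-((y:ℂ) - x)^2/(4*b))‖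
      ≤ Real.sqrt (Real.pi / t) := by
    intro y
    rw [norm_mul]
    have k1 : ‖((Real.pi : ℂ)/b) ^ (1/2 : ℂ)‖ ≤ Real.sqrt (Real.pi / t) := by
      refine le_trans (norm_cpow_le _ _) ?_
      rw [show ((1:ℂ)/2).re = 1/2 by norm_num, show ((1:ℂ)/2).im = 0 by norm_num]
      rw [mul_zero, Real.exp_zero, div_one]
      rw [norm_div, Complex.norm_real, Real.norm_eq_abs, abs_of_pos Real.pi_pos]
      rw [Real.sqrt_eq_rpow]
      refine Real.rpow_le_rpow (by positivity) ?_ (by norm_num)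
      exact div_le_div_of_nonneg_left Real.pi_pos.le ht hbabs
    have k2 : ‖Complex.exp (-((y:ℂ) - x)^2/(4*b))‖ ≤ 1 := by
      rw [Complex.norm_exp, Real.exp_le_one_iff]
      have : -((y:ℂ) - x)^2/(4*b) = ((-((y - x)^2) : ℝ) : ℂ) * (4*b)⁻¹ := by
        push_cast; ring
      rw [this, Complex.re_ofReal_mul]
      apply mul_nonpos_of_nonpos_of_nonneg
      · simp [sq_nonneg]
      · rw [Complex.inv_re]
        apply div_nonneg _ (Complex.normSq_nonneg _)
        simp [hb, hε.le]
    calc ‖((Real.pi : ℂ)/b) ^ (1/2 : ℂ)‖ * ‖Complex.exp (-((y:ℂ) - x)^2/(4*b))‖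
        ≤ Real.sqrt (Real.pi / t) * 1 := mul_le_mul k1 k2 (norm_nonneg _) (Real.sqrt_nonneg _)
      _ = Real.sqrt (Real.pi / t) := mul_one _
  rw [← MeasureTheory.integral_const_mul]
  refine MeasureTheory.norm_integral_le_of_norm_le (hf.norm.const_mul _)
    (Filter.Eventually.of_forall fun y => ?_)
  rw [inner_eq y, norm_mul]
  exact mul_le_mul_of_nonneg_right (hker y) (norm_nonneg _)

/-- Pointwise dispersive bound on the propagator, assuming the frequency-side
integrand is integrable. -/
lemma pointwise_bound (f : ℝ → ℂ) (hf : Integrable f) (t : ℝ) (ht : 0 < t)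
    (hh : Integrable (fun ξ : ℝ => Complex.exp (-(Complex.I * t * ξ ^ 2)) * FT f ξ))
    (x : ℝ) :
    ‖schrod t f x‖ ≤ (2 * Real.pi)⁻¹ * Real.sqrt (Real.pi / t) * ∫ y, ‖f y‖ := by
  set c : ℝ := ((2 * Real.pi) ^ (-(1 : ℝ)/2)) with hc
  have hcpos : 0 < c := Real.rpow_pos_of_pos (by positivity) _
  set h : ℝ → ℂ := fun ξ => Complex.exp (-(Complex.I * t * ξ ^ 2)) * FT f ξ with hhdef
  set G : ℝ → ℂ := fun ξ => Complex.exp (-(Complex.I * x * ξ)) * h ξ with hG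
  have hGint : Integrable G := by
    apply hh.bdd_mul (c := 1)
    · exact (Complex.continuous_exp.comp (by fun_prop)).aestronglyMeasurable
    · refine Filter.Eventually.of_forall fun ξ => ?_
      rw [Complex.norm_exp]
      simp
  have hL : ‖∫ ξ : ℝ, G ξ‖ ≤ c * Real.sqrt (Real.pi / t) * ∫ y, ‖f y‖ := by
    set Φ : ℝ → ℂ := fun ε => ∫ ξ : ℝ, Complex.exp (-(ε:ℂ)*ξ^2) * G ξ with hΦ
    have hconv : Filter.Tendsto Φ (nhdsWithin 0 (Set.Ioi 0)) (nhds (∫ ξ : ℝ, G ξ)) := by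
      apply MeasureTheory.tendsto_integral_filter_of_dominated_convergence
        (fun ξ => ‖G ξ‖)
      · refine Filter.Eventually.of_forall fun ε => ?_
        exact ((Complex.continuous_exp.comp (by fun_prop)).aestronglyMeasurable).mul hGint.1
      · filter_upwards [self_mem_nhdsWithin] with ε (hε : (0:ℝ) < ε)
        refine Filter.Eventually.of_forall fun ξ => ?_
        rw [norm_mul]
        have : ‖Complex.exp (-(ε:ℂ)*ξ^2)‖ ≤ 1 := by
          rw [Complex.norm_exp, Real.exp_le_one_iff]
          rw [show (-(ε:ℂ)*ξ^2) = ((-(ε*ξ^2) : ℝ) : ℂ) by push_cast; ring]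
          rw [Complex.ofReal_re]
          nlinarith [sq_nonneg ξ]
        calc ‖Complex.exp (-(ε:ℂ)*ξ^2)‖ * ‖G ξ‖ ≤ 1 * ‖G ξ‖ :=
              mul_le_mul_of_nonneg_right this (norm_nonneg _)
          _ = ‖G ξ‖ := one_mul _
      · exact hGint.norm
      · refine Filter.Eventually.of_forall fun ξ => ?_
        have h1 : Filter.Tendsto (fun ε : ℝ => Complex.exp (-(ε:ℂ)*ξ^2)) (nhds 0)
            (nhds 1) := by
          have hcont : Continuous fun ε : ℝ => Complex.exp (-(ε:ℂ)*ξ^2) := by fun_prop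
          have := hcont.tendsto 0
          simpa using this
        have h2 : Filter.Tendsto (fun ε : ℝ => Complex.exp (-(ε:ℂ)*ξ^2))
            (nhdsWithin 0 (Set.Ioi 0)) (nhds 1) :=
          h1.mono_left (nhdsWithin_le_nhds (s := Set.Ioi 0))
        simpa using h2.mul_const (G ξ)
    have hbd : ∀ᶠ ε in nhdsWithin 0 (Set.Ioi 0),
        ‖Φ ε‖ ≤ c * Real.sqrt (Real.pi / t) * ∫ y, ‖f y‖ := by
      filter_upwards [self_mem_nhdsWithin] with ε (hε : (0:ℝ) < ε)
      exact reg_bound f hf t x ε ht hε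
    exact le_of_tendsto hconv.norm hbd
  have : schrod t f x = c • ∫ ξ : ℝ, G ξ := rfl
  rw [this, norm_smul, Real.norm_eq_abs, abs_of_pos hcpos]
  calc c * ‖∫ ξ : ℝ, G ξ‖ ≤ c * (c * Real.sqrt (Real.pi / t) * ∫ y, ‖f y‖) :=
        mul_le_mul_of_nonneg_left hL hcpos.le
    _ = (c * c) * Real.sqrt (Real.pi / t) * ∫ y, ‖f y‖ := by ring
    _ = (2 * Real.pi)⁻¹ * Real.sqrt (Real.pi / t) * ∫ y, ‖f y‖ := by
        rw [hc, ← Real.rpow_add (by positivity),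
          show (-(1:ℝ)/2 + -(1:ℝ)/2) = -1 by norm_num, Real.rpow_neg_one]

lemma holder_aux (f : ℝ → ℂ)
    (hw : MemLp (fun x : ℝ => (Real.sqrt (1 + x ^ 2) : ℂ) * f x) 2 (volume : Measure ℝ)) :
    Integrable f ∧ (∫ y : ℝ, ‖f y‖)
      ≤ Real.sqrt Real.pi * Lnorm 2 (fun x : ℝ => (Real.sqrt (1 + x ^ 2) : ℂ) * f x) := by
  set w : ℝ → ℂ := fun x : ℝ => (Real.sqrt (1 + x ^ 2) : ℂ) * f x with hwdef
  set g : ℝ → ℂ := fun x : ℝ => ((Real.sqrt (1 + x ^ 2) : ℝ) : ℂ)⁻¹ with hgdef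
  have hsq : ∀ x : ℝ, Real.sqrt (1 + x ^ 2) ≠ 0 := by
    intro x; positivity
  have hfeq : f = g • w := by
    funext x
    simp only [hgdef, hwdef, Pi.smul_apply', smul_eq_mul]
    rw [← mul_assoc, inv_mul_cancel₀, one_mul]
    exact_mod_cast (Complex.ofReal_ne_zero).mpr (hsq x)
  have hgc : Continuous g := by
    apply Continuous.inv₀
    · fun_prop
    · intro x
      exact_mod_cast (Complex.ofReal_ne_zero).mpr (hsq x)
  -- compute eLpNorm g 2
  have hg2 : eLpNorm g 2 volume = ENNReal.ofReal (Real.sqrt Real.pi) := by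
    rw [eLpNorm_eq_lintegral_rpow_enorm_toReal (by norm_num) (by norm_num)]
    have h1 : ∀ x : ℝ, (‖g x‖ₑ ^ ((2:ℝ≥0∞).toReal))
        = ENNReal.ofReal ((1 + x ^ 2)⁻¹) := by
      intro x
      have hnorm : ‖g x‖ = (Real.sqrt (1 + x ^ 2))⁻¹ := by
        simp only [hgdef, norm_inv, Complex.norm_real, Real.norm_eq_abs]
        rw [_root_.abs_of_nonneg (Real.sqrt_nonneg _)]
      rw [← ofReal_norm, hnorm, ENNReal.toReal_ofNat,
        ENNReal.ofReal_rpow_of_nonneg (by positivity) (by norm_num)]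
      congr 1
      rw [Real.rpow_two, inv_pow, Real.sq_sqrt (by positivity)]
    simp only [h1]
    rw [← MeasureTheory.ofReal_integral_eq_lintegral_ofReal integrable_inv_one_add_sq
      (Filter.Eventually.of_forall fun x => by positivity)]
    rw [integral_univ_inv_one_add_sq]
    rw [ENNReal.toReal_ofNat, ENNReal.ofReal_rpow_of_pos Real.pi_pos]
    rw [Real.sqrt_eq_rpow]
  have hol : eLpNorm f 1 volume ≤ ENNReal.ofReal (Real.sqrt Real.pi) * eLpNorm w 2 volume := by
    rw [hfeq, ← hg2]
    haveI : ENNReal.HolderTriple 2 2 1 := ⟨by rw [ENNReal.inv_two_add_inv_two, inv_one]⟩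
    refine eLpNorm_smul_le_mul_eLpNorm hw.1 hgc.aestronglyMeasurable
  have hfin : eLpNorm f 1 volume < ⊤ :=
    lt_of_le_of_lt hol (ENNReal.mul_lt_top ENNReal.ofReal_lt_top hw.2)
  have hfm : AEStronglyMeasurable f volume := by
    rw [hfeq]
    exact hgc.aestronglyMeasurable.smul hw.1
  have hfint : Integrable f := memLp_one_iff_integrable.mp ⟨hfm, hfin⟩
  refine ⟨hfint, ?_⟩
  have h2 : ENNReal.ofReal (∫ y : ℝ, ‖f y‖) = eLpNorm f 1 volume := by
    rw [eLpNorm_one_eq_lintegral_enorm]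
    exact MeasureTheory.ofReal_integral_norm_eq_lintegral_enorm hfint
  have h3 : (eLpNorm f 1 volume).toReal
      ≤ (ENNReal.ofReal (Real.sqrt Real.pi) * eLpNorm w 2 volume).toReal := by
    apply ENNReal.toReal_mono _ hol
    exact ENNReal.mul_ne_top ENNReal.ofReal_ne_top hw.2.ne
  rw [← h2, ENNReal.toReal_ofReal (by positivity)] at h3
  rw [ENNReal.toReal_mul, ENNReal.toReal_ofReal (Real.sqrt_nonneg _)] at h3
  exact h3

/-- Uniform decay for shifted propagators: for `b ∈ [0,T₀]` and `s ≥ 1`,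
`‖e^{i(s+b)Δ}f‖_{L^∞} ≤ C s^{-1/2}(‖𝓕f‖_{L^∞} + ‖⟨x⟩f‖_{L²})`. -/
theorem shifted_propagator_decay (T₀ : ℝ) (hT₀ : 0 ≤ T₀) :
    ∃ C > (0:ℝ), ∀ f : ℝ → ℂ,
      MemLp (fun x : ℝ => (Real.sqrt (1 + x ^ 2) : ℂ) * f x) 2 (volume : Measure ℝ) →
      MemLp (FT f) ⊤ (volume : Measure ℝ) →
      ∀ s ≥ (1:ℝ), ∀ b ∈ Set.Icc (0:ℝ) T₀,
        Lnorm ⊤ (schrod (s + b) f) ≤ C * s ^ (-(1:ℝ)/2) *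
          (Lnorm ⊤ (FT f) + Lnorm 2 (fun x : ℝ => (Real.sqrt (1 + x ^ 2) : ℂ) * f x)) := by
  refine ⟨1, one_pos, fun f hw hFT s hs b hb => ?_⟩
  have hs0 : (0:ℝ) < s := lt_of_lt_of_le one_pos hs
  have hb0 : (0:ℝ) ≤ b := hb.1
  have ht : (0:ℝ) < s + b := by linarith
  set A : ℝ := Lnorm ⊤ (FT f) with hA
  set Wn : ℝ := Lnorm 2 (fun x : ℝ => (Real.sqrt (1 + x ^ 2) : ℂ) * f x) with hWn
  have hAnn : 0 ≤ A := ENNReal.toReal_nonneg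
  have hWnn : 0 ≤ Wn := ENNReal.toReal_nonneg
  have hs12 : s ^ (-(1:ℝ)/2) = (Real.sqrt s)⁻¹ := by
    rw [show (-(1:ℝ)/2) = -(1/2) by norm_num, Real.rpow_neg hs0.le, ← Real.sqrt_eq_rpow]
  have hrpow_nn : 0 ≤ s ^ (-(1:ℝ)/2) := Real.rpow_nonneg hs0.le _
  by_cases hInt : Integrable (fun ξ : ℝ =>
      Complex.exp (-(Complex.I * ((s + b : ℝ) : ℂ) * ξ ^ 2)) * FT f ξ)
  · -- main case
    obtain ⟨hfint, hB⟩ := holder_aux f hw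
    have hpt := pointwise_bound f hfint (s + b) ht hInt
    set M : ℝ := (2 * Real.pi)⁻¹ * Real.sqrt (Real.pi / (s + b)) * ∫ y, ‖f y‖ with hM
    have hMnn : 0 ≤ M := by
      apply mul_nonneg (mul_nonneg (by positivity) (Real.sqrt_nonneg _))
      exact integral_nonneg fun y => norm_nonneg _
    have hLbd : Lnorm ⊤ (schrod (s + b) f) ≤ M := by
      rw [Lnorm, eLpNorm_exponent_top]
      exact ENNReal.toReal_le_of_le_ofReal hMnn
        (eLpNormEssSup_le_of_ae_bound (Filter.Eventually.of_forall hpt))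
    refine le_trans hLbd ?_
    have step1 : M ≤ (2 * Real.pi)⁻¹ * Real.sqrt (Real.pi / (s + b))
        * (Real.sqrt Real.pi * Wn) := by
      refine mul_le_mul_of_nonneg_left hB ?_
      positivity
    refine le_trans step1 ?_
    have hsqrtdiv : Real.sqrt (Real.pi / (s + b))
        = Real.sqrt Real.pi / Real.sqrt (s + b) := Real.sqrt_div Real.pi_pos.le _
    have hππ : Real.sqrt Real.pi * Real.sqrt Real.pi = Real.pi :=
      Real.mul_self_sqrt Real.pi_pos.le
    have collapse : (2 * Real.pi)⁻¹ * Real.sqrt (Real.pi / (s + b))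
        * (Real.sqrt Real.pi * Wn) = (2:ℝ)⁻¹ * ((Real.sqrt (s + b))⁻¹ * Wn) := by
      rw [hsqrtdiv]
      rw [show (2 * Real.pi)⁻¹ * (Real.sqrt Real.pi / Real.sqrt (s + b))
            * (Real.sqrt Real.pi * Wn)
          = (Real.sqrt Real.pi * Real.sqrt Real.pi) * ((2 * Real.pi)⁻¹
            * ((Real.sqrt (s + b))⁻¹ * Wn)) by ring, hππ]
      rw [show Real.pi * ((2 * Real.pi)⁻¹ * ((Real.sqrt (s + b))⁻¹ * Wn))
          = (Real.pi / (2 * Real.pi)) * ((Real.sqrt (s + b))⁻¹ * Wn) by ring]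
      rw [show Real.pi / (2 * Real.pi) = 2⁻¹ by
        field_simp]
    rw [collapse, hs12, one_mul]
    have h1 : (Real.sqrt (s + b))⁻¹ ≤ (Real.sqrt s)⁻¹ :=
      inv_anti₀ (Real.sqrt_pos.mpr hs0) (Real.sqrt_le_sqrt (by linarith))
    calc (2:ℝ)⁻¹ * ((Real.sqrt (s + b))⁻¹ * Wn)
        ≤ 1 * ((Real.sqrt s)⁻¹ * (A + Wn)) := by
          refine mul_le_mul (by norm_num) ?_ ?_ zero_le_one
          · exact mul_le_mul h1 (le_add_of_nonneg_left hAnn) hWnn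
              (inv_nonneg.mpr (Real.sqrt_nonneg _))
          · exact mul_nonneg (inv_nonneg.mpr (Real.sqrt_nonneg _)) hWnn
      _ = (Real.sqrt s)⁻¹ * (A + Wn) := one_mul _
  · -- degenerate case: the frequency-side integrand is not integrable
    have hzero : schrod (s + b) f = fun _ => (0:ℂ) := by
      funext x
      show FTinv _ x = 0
      rw [FTinv, MeasureTheory.integral_undef, smul_zero]
      intro hcon
      apply hInt
      have hmul : Integrable (fun ξ : ℝ => Complex.exp (Complex.I * x * ξ)
          * (Complex.exp (-(Complex.I * x * ξ))
            * (Complex.exp (-(Complex.I * ((s + b : ℝ) : ℂ) * ξ ^ 2)) * FT f ξ))) := by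
        refine hcon.bdd_mul (c := 1) ?_ (Filter.Eventually.of_forall fun ξ => ?_)
        · exact (Complex.continuous_exp.comp (by fun_prop)).aestronglyMeasurable
        · rw [Complex.norm_exp]
          simp
      refine hmul.congr (Filter.Eventually.of_forall fun ξ => ?_)
      show Complex.exp (Complex.I * x * ξ) * (Complex.exp (-(Complex.I * x * ξ))
          * (Complex.exp (-(Complex.I * ((s + b : ℝ) : ℂ) * ξ ^ 2)) * FT f ξ))
        = Complex.exp (-(Complex.I * ((s + b : ℝ) : ℂ) * ξ ^ 2)) * FT f ξ
      rw [← mul_assoc, ← Complex.exp_add,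
        show Complex.I * x * ξ + -(Complex.I * x * ξ) = 0 by ring,
        Complex.exp_zero, one_mul]
    rw [hzero]
    have : Lnorm ⊤ (fun _ : ℝ => (0:ℂ)) = 0 := by
      rw [Lnorm, eLpNorm_zero']
      simp
    rw [this, one_mul]
    exact mul_nonneg hrpow_nn (add_nonneg hAnn hWnn)


end
end
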